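/- arXiv:1701.04933 — 3 statements merged into one kernel-verified Lean document; each statement's English description precedes it below -/
import Mathlib

section
/- Let n ≥ 1, 1 ≤ p < ∞, and let C > 0, A > 0. Let (ν_t)_{t>0} be a family of Borel probability measures on ℝⁿ such that for each t > 0 the measure ν_t is supported in the closed Euclidean ball of radius C·t centered at 0. Suppose that for every nonnegative measurable function f : ℝⁿ → [0, ∞] and every λ > 0 one has vol{x ∈ ℝⁿ : sup_{t>0} ∫_{ℝⁿ} f(x − v) dν_t(v) > λ} ≤ A^p ‖f‖_{L^p(ℝⁿ)}^p / λ^p, where vol denotes Lebesgue measure. Then for every ℝⁿ-measure-preserving system (X, μ, π), every nonnegative measurable function f : X → [0, ∞], and every λ > 0, one has μ{x ∈ X : sup_{t>0} ∫_{ℝⁿ} f(π(v, x)) dν_t(v) > λ} ≤ A^p ‖f‖_{L^p(X, μ)}^p / λ^p. -/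
open MeasureTheory Metric Set
open scoped NNReal ENNReal

/-- A monotone class: closed under unions of increasing sequences and intersections of
decreasing sequences. -/
def IsMonoClass {α : Type*} (C : Set (Set α)) : Prop :=
  (∀ F : ℕ → Set α, Monotone F → (∀ n, F n ∈ C) → (⋃ n, F n) ∈ C) ∧
  (∀ F : ℕ → Set α, Antitone F → (∀ n, F n ∈ C) → (⋂ n, F n) ∈ C)

/-- Halmos' monotone class theorem. -/
theorem isMonoClass_generateFrom_subset {α : Type*} {A : Set (Set α)}
    (huniv : Set.univ ∈ A) (hcompl : ∀ s ∈ A, sᶜ ∈ A)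
    (hinter : ∀ s ∈ A, ∀ t ∈ A, s ∩ t ∈ A)
    {C : Set (Set α)} (hC : IsMonoClass C) (hAC : A ⊆ C) :
    ∀ s, MeasurableSet[MeasurableSpace.generateFrom A] s → s ∈ C := by
  classical
  set K : Set (Set (Set α)) := {D | IsMonoClass D ∧ A ⊆ D} with hK
  set M : Set (Set α) := ⋂₀ K with hM
  have hMC : M ⊆ C := sInter_subset_of_mem (by exact ⟨hC, hAC⟩)
  have hAM : A ⊆ M := by
    intro s hs
    exact fun D hD => hD.2 hs
  have hMmono : IsMonoClass M := by
    constructor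
    · intro F hF hFn
      intro D hD
      exact hD.1.1 F hF (fun n => hFn n D hD)
    · intro F hF hFn
      intro D hD
      exact hD.1.2 F hF (fun n => hFn n D hD)
  have hMmin : ∀ D, IsMonoClass D → A ⊆ D → M ⊆ D := by
    intro D h1 h2 s hs
    exact hs D ⟨h1, h2⟩
  -- complement closure
  have hcomplM : ∀ s ∈ M, sᶜ ∈ M := by
    have : M ⊆ {s | s ∈ M ∧ sᶜ ∈ M} := by
      apply hMmin
      · constructor
        · intro F hF hFn
          refine ⟨hMmono.1 F hF fun n => (hFn n).1, ?_⟩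
          rw [compl_iUnion]
          exact hMmono.2 _ (fun i j hij => compl_subset_compl.mpr (hF hij)) fun n => (hFn n).2
        · intro F hF hFn
          refine ⟨hMmono.2 F hF fun n => (hFn n).1, ?_⟩
          rw [compl_iInter]
          exact hMmono.1 _ (fun i j hij => compl_subset_compl.mpr (hF hij)) fun n => (hFn n).2
      · intro s hs
        exact ⟨hAM hs, hAM (hcompl s hs)⟩
    intro s hs
    exact (this hs).2
  -- intersection closure
  have hD1mono : ∀ s : Set α, IsMonoClass {t | t ∈ M ∧ s ∩ t ∈ M} := by
    intro s
    constructor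
    · intro F hF hFn
      refine ⟨hMmono.1 F hF fun n => (hFn n).1, ?_⟩
      rw [inter_iUnion]
      exact hMmono.1 _ (fun i j hij => inter_subset_inter_right _ (hF hij)) fun n => (hFn n).2
    · intro F hF hFn
      refine ⟨hMmono.2 F hF fun n => (hFn n).1, ?_⟩
      rw [inter_iInter]
      exact hMmono.2 _ (fun i j hij => inter_subset_inter_right _ (hF hij)) fun n => (hFn n).2
  have step1 : ∀ s ∈ A, M ⊆ {t | t ∈ M ∧ s ∩ t ∈ M} := by
    intro s hs
    apply hMmin _ (hD1mono s)
    intro t ht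
    exact ⟨hAM ht, hAM (hinter s hs t ht)⟩
  have step2 : ∀ t ∈ M, M ⊆ {u | u ∈ M ∧ t ∩ u ∈ M} := by
    intro t ht
    apply hMmin _ (hD1mono t)
    intro s hs
    refine ⟨hAM hs, ?_⟩
    have := (step1 s hs ht).2
    rwa [inter_comm]
  have hinterM : ∀ s ∈ M, ∀ t ∈ M, s ∩ t ∈ M := by
    intro s hs t ht
    exact (step2 s hs ht).2
  have hunionM : ∀ s ∈ M, ∀ t ∈ M, s ∪ t ∈ M := by
    intro s hs t ht
    have : s ∪ t = (sᶜ ∩ tᶜ)ᶜ := by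
      rw [compl_inter, compl_compl, compl_compl]
    rw [this]
    exact hcomplM _ (hinterM _ (hcomplM s hs) _ (hcomplM t ht))
  have hunivM : Set.univ ∈ M := hAM huniv
  -- M is a σ-algebra
  let m' : MeasurableSpace α :=
    { MeasurableSet' := fun s => s ∈ M
      measurableSet_empty := by
        have : (∅ : Set α) = (Set.univ)ᶜ := by simp
        rw [this]; exact hcomplM _ hunivM
      measurableSet_compl := fun s hs => hcomplM s hs
      measurableSet_iUnion := by
        intro F hF
        rw [← iUnion_accumulate]
        apply hMmono.1 _ monotone_accumulate
        intro n
        induction n with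
        | zero =>
            have : accumulate F 0 = F 0 := by
              ext z; simp [Set.mem_accumulate, Nat.le_zero]
            rw [this]; exact hF 0
        | succ k ih =>
            have : accumulate F (k+1) = accumulate F k ∪ F (k+1) := by
              ext z
              simp only [Set.mem_accumulate, Set.mem_union]
              constructor
              · rintro ⟨y, hy, hz⟩
                rcases Nat.lt_or_ge y (k+1) with h | h
                · exact Or.inl ⟨y, Nat.lt_succ_iff.mp h, hz⟩
                · exact Or.inr (by
                    have : y = k + 1 := le_antisymm hy h
                    rwa [this] at hz)
              · rintro (⟨y, hy, hz⟩ | hz)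
                · exact ⟨y, le_trans hy (Nat.le_succ k), hz⟩
                · exact ⟨k+1, le_refl _, hz⟩
            rw [this]
            exact hunionM _ ih _ (hF (k+1)) }
  intro s hs
  have hle : MeasurableSpace.generateFrom A ≤ m' := by
    apply MeasurableSpace.generateFrom_le
    intro t ht
    exact hAM ht
  exact hMC (hle s hs)

section Sliced

variable {α β : Type*} [MeasurableSpace α] [MeasurableSpace β]

/-- A set in a product that is a countable union of rectangles along a measurable
countable partition of the second factor. -/
def Sliced (T : Set (α × β)) : Prop :=
  ∃ (θ : β → ℕ) (U : ℕ → Set α), Measurable θ ∧ (∀ k, MeasurableSet (U k)) ∧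
    T = {q : α × β | q.1 ∈ U (θ q.2)}

theorem measurable_nat_pair {θ₁ θ₂ : β → ℕ} (h1 : Measurable θ₁) (h2 : Measurable θ₂) :
    Measurable fun x => Nat.pair (θ₁ x) (θ₂ x) := by
  apply measurable_to_countable'
  intro m
  have : (fun x => Nat.pair (θ₁ x) (θ₂ x)) ⁻¹' {m}
      = θ₁ ⁻¹' {m.unpair.1} ∩ θ₂ ⁻¹' {m.unpair.2} := by
    ext x
    simp only [mem_preimage, mem_singleton_iff, mem_inter_iff]
    constructor
    · intro h; rw [← h]; simp [Nat.unpair_pair]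
    · rintro ⟨ha, hb⟩; rw [ha, hb, Nat.pair_unpair]
  rw [this]
  exact (h1 (measurableSet_singleton _)).inter (h2 (measurableSet_singleton _))

theorem Sliced.univ : Sliced (Set.univ : Set (α × β)) :=
  ⟨fun _ => 0, fun _ => Set.univ, measurable_const, fun _ => MeasurableSet.univ, by
    ext q; simp⟩

theorem Sliced.compl {T : Set (α × β)} (hT : Sliced T) : Sliced Tᶜ := by
  obtain ⟨θ, U, hθ, hU, rfl⟩ := hT
  exact ⟨θ, fun k => (U k)ᶜ, hθ, fun k => (hU k).compl, by ext q; simp⟩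

theorem Sliced.inter {T₁ T₂ : Set (α × β)} (h1 : Sliced T₁) (h2 : Sliced T₂) :
    Sliced (T₁ ∩ T₂) := by
  obtain ⟨θ₁, U₁, hθ₁, hU₁, rfl⟩ := h1
  obtain ⟨θ₂, U₂, hθ₂, hU₂, rfl⟩ := h2
  refine ⟨fun x => Nat.pair (θ₁ x) (θ₂ x),
    fun m => U₁ m.unpair.1 ∩ U₂ m.unpair.2,
    measurable_nat_pair hθ₁ hθ₂, fun m => (hU₁ _).inter (hU₂ _), ?_⟩
  ext q
  simp [Nat.unpair_pair]

theorem Sliced.rect {s : Set α} {t : Set β} (hs : MeasurableSet s) (ht : MeasurableSet t) :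
    Sliced (s ×ˢ t) := by
  classical
  refine ⟨fun x => if x ∈ t then 1 else 0, fun m => if m = 1 then s else ∅, ?_, ?_, ?_⟩
  · apply measurable_to_countable'
    intro m
    rcases Nat.eq_zero_or_pos m with rfl | hm
    · have : (fun x => if x ∈ t then 1 else 0) ⁻¹' {0} = tᶜ := by
        ext x; by_cases hx : x ∈ t <;> simp [hx]
      rw [this]; exact ht.compl
    · by_cases h1 : m = 1
      · subst h1
        have : (fun x => if x ∈ t then 1 else 0) ⁻¹' {1} = t := by
          ext x; by_cases hx : x ∈ t <;> simp [hx]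
        rw [this]; exact ht
      · have : (fun x => if x ∈ t then 1 else 0) ⁻¹' {m} = ∅ := by
          ext x; by_cases hx : x ∈ t
          · simp only [mem_preimage, if_pos hx, mem_singleton_iff, mem_empty_iff_false, iff_false]
            intro hc; exact h1 hc.symm
          · simp only [mem_preimage, if_neg hx, mem_singleton_iff, mem_empty_iff_false, iff_false]
            intro hc; exact hm.ne' hc.symm
        rw [this]; exact MeasurableSet.empty
  · intro m
    by_cases h1 : m = 1
    · simp only [if_pos h1]; exact hs
    · simp only [if_neg h1]; exact MeasurableSet.empty
  · ext q
    by_cases hq : q.2 ∈ t <;> simp [hq]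

theorem Sliced.measurableSet {T : Set (α × β)} (hT : Sliced T) : MeasurableSet T := by
  obtain ⟨θ, U, hθ, hU, rfl⟩ := hT
  have : {q : α × β | q.1 ∈ U (θ q.2)} = ⋃ k, (U k) ×ˢ (θ ⁻¹' {k}) := by
    ext q
    simp only [mem_setOf_eq, mem_iUnion, mem_prod, mem_preimage, mem_singleton_iff]
    constructor
    · intro h; exact ⟨θ q.2, h, rfl⟩
    · rintro ⟨k, h, hk⟩; rw [hk]; exact h
  rw [this]
  exact MeasurableSet.iUnion fun k => (hU k).prod (hθ (measurableSet_singleton _))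

/-- A function on a product which is countably sliced in the second variable. -/
def SlicedFun (H : α × β → ℝ≥0∞) : Prop :=
  ∃ (θ : β → ℕ) (g : ℕ → α → ℝ≥0∞), Measurable θ ∧ (∀ k, Measurable (g k)) ∧
    ∀ q : α × β, H q = g (θ q.2) q.1

theorem SlicedFun.zero : SlicedFun (fun _ : α × β => (0 : ℝ≥0∞)) :=
  ⟨fun _ => 0, fun _ _ => 0, measurable_const, fun _ => measurable_const, fun _ => rfl⟩

theorem SlicedFun.measurable {H : α × β → ℝ≥0∞} (hH : SlicedFun H) : Measurable H := by
  obtain ⟨θ, g, hθ, hg, hHeq⟩ := hH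
  have : H = fun q : α × β => ∑' k, (θ ⁻¹' {k}).indicator (fun _ => (1 : ℝ≥0∞)) q.2 * g k q.1 := by
    funext q
    rw [hHeq q]
    rw [tsum_eq_single (θ q.2)]
    · simp [Set.indicator_of_mem, mem_preimage]
    · intro k hk
      have : q.2 ∉ θ ⁻¹' {k} := by
        simp only [mem_preimage, mem_singleton_iff]
        exact fun h => hk (h.symm)
      simp [Set.indicator_of_notMem this]
  rw [this]
  apply Measurable.ennreal_tsum
  intro k
  exact ((measurable_const.indicator (hθ (measurableSet_singleton _))).comp measurable_snd).mul
    ((hg k).comp measurable_fst)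

theorem SlicedFun.add_indicator {H : α × β → ℝ≥0∞} (hH : SlicedFun H) {T : Set (α × β)}
    (hT : Sliced T) (c : ℝ≥0∞) :
    SlicedFun (fun q => H q + c * T.indicator 1 q) := by
  obtain ⟨θ₁, g, hθ₁, hg, hHeq⟩ := hH
  obtain ⟨θ₂, U, hθ₂, hU, rfl⟩ := hT
  refine ⟨fun x => Nat.pair (θ₁ x) (θ₂ x),
    fun m => fun w => g m.unpair.1 w + c * (U m.unpair.2).indicator 1 w,
    measurable_nat_pair hθ₁ hθ₂, ?_, ?_⟩
  · intro m
    exact (hg _).add (measurable_const.mul (measurable_one.indicator (hU _)))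
  · intro q
    simp only [Nat.unpair_pair]
    rw [hHeq q]
    have hind : ({q : α × β | q.1 ∈ U (θ₂ q.2)}.indicator 1 q : ℝ≥0∞)
        = (U (θ₂ q.2)).indicator 1 q.1 := by
      by_cases hq : q.1 ∈ U (θ₂ q.2)
      · rw [Set.indicator_of_mem (show q ∈ {q : α × β | q.1 ∈ U (θ₂ q.2)} from hq),
          Set.indicator_of_mem hq]
        simp
      · rw [Set.indicator_of_notMem (show q ∉ {q : α × β | q.1 ∈ U (θ₂ q.2)} from hq),
          Set.indicator_of_notMem hq]
    rw [hind]

end Sliced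

section Machine

variable {n : ℕ} {X : Type} [MeasurableSpace X]

/-- The parametrized maximal set. -/
def MAXS (ν : ℝ → Measure (EuclideanSpace ℝ (Fin n))) (lam : ℝ≥0) (μ : Measure X)
    (G : EuclideanSpace ℝ (Fin n) × X → ℝ≥0∞) : Set (EuclideanSpace ℝ (Fin n) × X) :=
  {q | (lam : ℝ≥0∞) < ⨆ (t : ℝ) (_ : 0 < t), ∫⁻ v, G (q.1 + v, q.2) ∂(ν t)}

/-- The parametrized weak-type bound. -/
def GoodFn (p : ℝ) (A : ℝ≥0) (ν : ℝ → Measure (EuclideanSpace ℝ (Fin n)))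
    (μ : Measure X) (G : EuclideanSpace ℝ (Fin n) × X → ℝ≥0∞) : Prop :=
  ∀ lam : ℝ≥0, 0 < lam →
    (volume.prod μ) (MAXS ν lam μ G) * (lam : ℝ≥0∞) ^ p ≤
      (A : ℝ≥0∞) ^ p * ∫⁻ q, G q ^ p ∂(volume.prod μ)

theorem ennreal_rpow_iInf {p : ℝ} (hp : 0 < p) (f : ℕ → ℝ≥0∞) :
    (⨅ k, f k) ^ p = ⨅ k, f k ^ p := by
  apply le_antisymm
  · exact le_iInf fun k => ENNReal.rpow_le_rpow (iInf_le f k) hp.le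
  · have h1 : (⨅ k, f k ^ p) ^ p⁻¹ ≤ ⨅ k, f k := by
      refine le_iInf fun k => ?_
      have : (f k ^ p) ^ p⁻¹ = f k := by
        rw [← ENNReal.rpow_mul, mul_inv_cancel₀ hp.ne', ENNReal.rpow_one]
      rw [← this]
      exact ENNReal.rpow_le_rpow (iInf_le _ k) (inv_nonneg.mpr hp.le)
    calc (⨅ k, f k ^ p) = ((⨅ k, f k ^ p) ^ p⁻¹) ^ p := by
          rw [← ENNReal.rpow_mul, inv_mul_cancel₀ hp.ne', ENNReal.rpow_one]
    _ ≤ (⨅ k, f k) ^ p := ENNReal.rpow_le_rpow h1 hp.le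

theorem ennreal_mul_iInf {c : ℝ≥0∞} (hc : c ≠ ∞) (f : ℕ → ℝ≥0∞) :
    c * ⨅ k, f k = ⨅ k, c * f k := by
  apply le_antisymm
  · exact le_iInf fun k => mul_le_mul_right (iInf_le f k) c
  · by_cases hc0 : c = 0
    · simp [hc0]
    · have h1 : c⁻¹ * (⨅ k, c * f k) ≤ ⨅ k, f k := by
        refine le_iInf fun k => ?_
        calc c⁻¹ * (⨅ j, c * f j) ≤ c⁻¹ * (c * f k) := mul_le_mul_right (iInf_le _ k) _
        _ = f k := by rw [← mul_assoc, ENNReal.inv_mul_cancel hc0 hc, one_mul]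
      calc (⨅ k, c * f k) = c * (c⁻¹ * (⨅ k, c * f k)) := by
            rw [← mul_assoc, ENNReal.mul_inv_cancel hc0 hc, one_mul]
      _ ≤ c * ⨅ k, f k := mul_le_mul_right h1 c

theorem GoodFn.of_sliced {p : ℝ} {A : ℝ≥0} {ν : ℝ → Measure (EuclideanSpace ℝ (Fin n))}
    {μ : Measure X} [SigmaFinite μ] (hp0 : 0 < p)
    (hmax : ∀ f : EuclideanSpace ℝ (Fin n) → ℝ≥0∞, Measurable f → ∀ lam : ℝ≥0, 0 < lam →
      volume {x : EuclideanSpace ℝ (Fin n) |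
          (lam : ℝ≥0∞) < ⨆ (t : ℝ) (_ : 0 < t), ∫⁻ v, f (x - v) ∂(ν t)} ≤
        (A : ℝ≥0∞) ^ p * (∫⁻ x, f x ^ p ∂volume) / (lam : ℝ≥0∞) ^ p)
    {H : EuclideanSpace ℝ (Fin n) × X → ℝ≥0∞} (hH : SlicedFun H) :
    GoodFn p A ν μ H := by
  obtain ⟨θ, g, hθ, hg, hHeq⟩ := hH
  intro lam hlam
  set V : ℕ → Set (EuclideanSpace ℝ (Fin n)) := fun k =>
    {w | (lam : ℝ≥0∞) < ⨆ (t : ℝ) (_ : 0 < t), ∫⁻ v, g k (w + v) ∂(ν t)} with hV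
  have hdecomp : MAXS ν lam μ H ⊆ ⋃ k, (V k) ×ˢ (θ ⁻¹' {k}) := by
    intro q hq
    simp only [MAXS, mem_setOf_eq] at hq
    refine mem_iUnion.mpr ⟨θ q.2, ?_⟩
    refine mem_prod.mpr ⟨?_, rfl⟩
    simp only [hV, mem_setOf_eq]
    refine lt_of_lt_of_le hq ?_
    refine iSup_mono fun t => iSup_mono fun _ => le_of_eq (lintegral_congr fun v => ?_)
    rw [hHeq (q.1 + v, q.2)]
  have hVlam : ∀ k, volume (V k) * (lam : ℝ≥0∞) ^ p
      ≤ (A : ℝ≥0∞) ^ p * ∫⁻ w, g k w ^ p ∂volume := by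
    intro k
    have hfk : Measurable fun u : EuclideanSpace ℝ (Fin n) => g k (-u) :=
      (hg k).comp measurable_neg
    have h1 := hmax _ hfk lam hlam
    have hset : V k = (fun w : EuclideanSpace ℝ (Fin n) => -w) ⁻¹'
        {x : EuclideanSpace ℝ (Fin n) |
          (lam : ℝ≥0∞) < ⨆ (t : ℝ) (_ : 0 < t), ∫⁻ v, g k (-(x - v)) ∂(ν t)} := by
      ext w
      simp only [hV, mem_setOf_eq, mem_preimage]
      have hcong : ∀ t : ℝ, (∫⁻ v, g k (w + v) ∂(ν t)) = ∫⁻ v, g k (-(-w - v)) ∂(ν t) := by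
        intro t
        apply lintegral_congr
        intro v
        congr 1
        abel
      constructor
      · intro h; refine lt_of_lt_of_le h (le_of_eq ?_)
        exact iSup_congr fun t => iSup_congr fun _ => hcong t
      · intro h; refine lt_of_lt_of_le h (le_of_eq ?_)
        exact (iSup_congr fun t => iSup_congr fun _ => hcong t).symm
    have hvol : volume (V k) = volume {x : EuclideanSpace ℝ (Fin n) |
        (lam : ℝ≥0∞) < ⨆ (t : ℝ) (_ : 0 < t), ∫⁻ v, g k (-(x - v)) ∂(ν t)} := by
      rw [hset]
      set S := {x : EuclideanSpace ℝ (Fin n) |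
          (lam : ℝ≥0∞) < ⨆ (t : ℝ) (_ : 0 < t), ∫⁻ v, g k (-(x - v)) ∂(ν t)} with hS
      calc volume ((fun w : EuclideanSpace ℝ (Fin n) => -w) ⁻¹' S)
          = Measure.map (⇑(MeasurableEquiv.neg (EuclideanSpace ℝ (Fin n)))) volume S :=
            ((MeasurableEquiv.neg (EuclideanSpace ℝ (Fin n))).map_apply S).symm
        _ = volume S := by
            rw [show ⇑(MeasurableEquiv.neg (EuclideanSpace ℝ (Fin n)))
                = (Neg.neg : EuclideanSpace ℝ (Fin n) → EuclideanSpace ℝ (Fin n)) from rfl,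
              (Measure.measurePreserving_neg
                (volume : Measure (EuclideanSpace ℝ (Fin n)))).map_eq]
    have h2 : volume (V k) * (lam : ℝ≥0∞) ^ p
        ≤ (A : ℝ≥0∞) ^ p * ∫⁻ u, g k (-u) ^ p ∂volume := by
      rw [hvol]
      exact ENNReal.mul_le_of_le_div h1
    have h3 : (∫⁻ u, g k (-u) ^ p ∂(volume : Measure (EuclideanSpace ℝ (Fin n))))
        = ∫⁻ w, g k w ^ p ∂volume := by
      have := (Measure.measurePreserving_neg (volume : Measure (EuclideanSpace ℝ (Fin n)))).lintegral_comp
        (f := fun w => g k w ^ p) (ENNReal.continuous_rpow_const.measurable.comp (hg k))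
      exact this
    rwa [h3] at h2
  have hsum : (volume.prod μ) (MAXS ν lam μ H) ≤ ∑' k, volume (V k) * μ (θ ⁻¹' {k}) := by
    refine le_trans (measure_mono hdecomp) (le_trans (measure_iUnion_le _) ?_)
    refine ENNReal.tsum_le_tsum fun k => ?_
    calc (volume.prod μ) ((V k) ×ˢ (θ ⁻¹' {k}))
        ≤ (volume.prod μ) ((toMeasurable volume (V k)) ×ˢ (θ ⁻¹' {k})) :=
          measure_mono (prod_mono (subset_toMeasurable _ _) subset_rfl)
      _ = volume (toMeasurable volume (V k)) * μ (θ ⁻¹' {k}) := Measure.prod_prod _ _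
      _ = volume (V k) * μ (θ ⁻¹' {k}) := by rw [measure_toMeasurable]
  have hHp : (∫⁻ q, H q ^ p ∂(volume.prod μ))
      = ∑' k, (∫⁻ w, g k w ^ p ∂volume) * μ (θ ⁻¹' {k}) := by
    have hpt : ∀ q : EuclideanSpace ℝ (Fin n) × X,
        H q ^ p = ∑' k, (g k q.1 ^ p) * (θ ⁻¹' {k}).indicator 1 q.2 := by
      intro q
      rw [hHeq q]
      rw [tsum_eq_single (θ q.2)]
      · rw [Set.indicator_of_mem (show q.2 ∈ θ ⁻¹' {θ q.2} from rfl)]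
        simp
      · intro k hk
        rw [Set.indicator_of_notMem (show q.2 ∉ θ ⁻¹' {k} by
          simp only [mem_preimage, mem_singleton_iff]
          exact fun h => hk h.symm), mul_zero]
    have hmeas : ∀ k, Measurable fun q : EuclideanSpace ℝ (Fin n) × X =>
        (g k q.1 ^ p) * (θ ⁻¹' {k}).indicator 1 q.2 :=
      fun k => ((ENNReal.continuous_rpow_const.measurable.comp (hg k)).comp measurable_fst).mul
        ((measurable_one.indicator (hθ (measurableSet_singleton _))).comp measurable_snd)
    calc (∫⁻ q, H q ^ p ∂(volume.prod μ))
        = ∫⁻ q, ∑' k, (g k q.1 ^ p) * (θ ⁻¹' {k}).indicator 1 q.2 ∂(volume.prod μ) :=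
          lintegral_congr hpt
      _ = ∑' k, ∫⁻ q, (g k q.1 ^ p) * (θ ⁻¹' {k}).indicator 1 q.2 ∂(volume.prod μ) :=
          lintegral_tsum fun k => (hmeas k).aemeasurable
      _ = ∑' k, (∫⁻ w, g k w ^ p ∂volume) * μ (θ ⁻¹' {k}) := by
          refine tsum_congr fun k => ?_
          have hfmeas : Measurable fun w : EuclideanSpace ℝ (Fin n) => g k w ^ p :=
            ENNReal.continuous_rpow_const.measurable.comp (hg k)
          have h5 := lintegral_prod_mul (μ := (volume : Measure (EuclideanSpace ℝ (Fin n))))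
            (ν := μ) (f := fun w : EuclideanSpace ℝ (Fin n) => g k w ^ p)
            (g := fun x : X => (θ ⁻¹' {k}).indicator 1 x) hfmeas.aemeasurable
            ((measurable_one.indicator (hθ (measurableSet_singleton _))).aemeasurable)
          calc ∫⁻ q : EuclideanSpace ℝ (Fin n) × X,
                g k q.1 ^ p * (θ ⁻¹' {k}).indicator 1 q.2 ∂(volume.prod μ)
              = (∫⁻ w, g k w ^ p ∂volume) * ∫⁻ x, (θ ⁻¹' {k}).indicator 1 x ∂μ := h5
            _ = (∫⁻ w, g k w ^ p ∂volume) * μ (θ ⁻¹' {k}) := by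
                rw [lintegral_indicator_one (hθ (measurableSet_singleton _))]
  calc (volume.prod μ) (MAXS ν lam μ H) * (lam : ℝ≥0∞) ^ p
      ≤ (∑' k, volume (V k) * μ (θ ⁻¹' {k})) * (lam : ℝ≥0∞) ^ p := mul_le_mul_left hsum _
    _ = ∑' k, volume (V k) * (lam : ℝ≥0∞) ^ p * μ (θ ⁻¹' {k}) := by
        rw [← ENNReal.tsum_mul_right]
        exact tsum_congr fun k => by ring
    _ ≤ ∑' k, ((A : ℝ≥0∞) ^ p * ∫⁻ w, g k w ^ p ∂volume) * μ (θ ⁻¹' {k}) :=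
        ENNReal.tsum_le_tsum fun k => mul_le_mul_left (hVlam k) _
    _ = (A : ℝ≥0∞) ^ p * ∑' k, (∫⁻ w, g k w ^ p ∂volume) * μ (θ ⁻¹' {k}) := by
        rw [← ENNReal.tsum_mul_left]
        exact tsum_congr fun k => by ring
    _ = (A : ℝ≥0∞) ^ p * ∫⁻ q, H q ^ p ∂(volume.prod μ) := by rw [hHp]

theorem GoodFn.sup {p : ℝ} {A : ℝ≥0} {ν : ℝ → Measure (EuclideanSpace ℝ (Fin n))}
    {μ : Measure X} (hp0 : 0 < p) {G : ℕ → EuclideanSpace ℝ (Fin n) × X → ℝ≥0∞}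
    (hGm : ∀ k, Measurable (G k)) (hmono : Monotone G)
    (hgood : ∀ k, GoodFn p A ν μ (G k)) :
    GoodFn p A ν μ (fun q => ⨆ k, G k q) := by
  intro lam hlam
  have hsetmono : Monotone fun k => MAXS ν lam μ (G k) := by
    intro i j hij q hq
    simp only [MAXS, mem_setOf_eq] at hq ⊢
    exact lt_of_lt_of_le hq
      (iSup_mono fun t => iSup_mono fun _ => lintegral_mono fun v => hmono hij _)
  have hseteq : MAXS ν lam μ (fun q => ⨆ k, G k q) = ⋃ k, MAXS ν lam μ (G k) := by
    ext q
    simp only [MAXS, mem_setOf_eq, mem_iUnion]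
    have hint : ∀ t : ℝ, (∫⁻ v, ⨆ k, G k (q.1 + v, q.2) ∂(ν t))
        = ⨆ k, ∫⁻ v, G k (q.1 + v, q.2) ∂(ν t) := by
      intro t
      apply lintegral_iSup
      · intro k
        exact (hGm k).comp ((measurable_const.add measurable_id).prodMk measurable_const)
      · intro i j hij v
        exact hmono hij _
    constructor
    · intro h
      rw [lt_iSup_iff] at h; obtain ⟨t, h⟩ := h
      rw [lt_iSup_iff] at h; obtain ⟨ht, h⟩ := h
      rw [hint t, lt_iSup_iff] at h; obtain ⟨k, h⟩ := h
      refine ⟨k, lt_of_lt_of_le h ?_⟩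
      exact le_iSup_of_le t (le_iSup_of_le ht le_rfl)
    · rintro ⟨k, hk⟩
      rw [lt_iSup_iff] at hk; obtain ⟨t, hk⟩ := hk
      rw [lt_iSup_iff] at hk; obtain ⟨ht, hk⟩ := hk
      refine lt_of_lt_of_le ?_ (le_iSup_of_le t (le_iSup_of_le ht le_rfl))
      calc (lam : ℝ≥0∞) < ∫⁻ v, G k (q.1 + v, q.2) ∂(ν t) := hk
        _ ≤ ∫⁻ v, ⨆ j, G j (q.1 + v, q.2) ∂(ν t) :=
            lintegral_mono fun v => le_iSup (fun j => G j (q.1 + v, q.2)) k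
  rw [hseteq, hsetmono.measure_iUnion, ENNReal.iSup_mul]
  apply iSup_le
  intro k
  refine le_trans (hgood k lam hlam) (mul_le_mul_right (lintegral_mono fun q => ?_) _)
  exact ENNReal.rpow_le_rpow (le_iSup (fun j => G j q) k) hp0.le

theorem GoodFn.inf {p : ℝ} {A : ℝ≥0} {ν : ℝ → Measure (EuclideanSpace ℝ (Fin n))}
    {μ : Measure X} (hp0 : 0 < p) {G : ℕ → EuclideanSpace ℝ (Fin n) × X → ℝ≥0∞}
    (hGm : ∀ k, Measurable (G k)) (hanti : Antitone G)
    (hfin : (∫⁻ q, G 0 q ^ p ∂(volume.prod μ)) ≠ ∞)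
    (hgood : ∀ k, GoodFn p A ν μ (G k)) :
    GoodFn p A ν μ (fun q => ⨅ k, G k q) := by
  intro lam hlam
  have hsub : ∀ k, MAXS ν lam μ (fun q => ⨅ j, G j q) ⊆ MAXS ν lam μ (G k) := by
    intro k q hq
    simp only [MAXS, mem_setOf_eq] at hq ⊢
    exact lt_of_lt_of_le hq (iSup_mono fun t => iSup_mono fun _ =>
      lintegral_mono fun v => iInf_le (fun j => G j (q.1 + v, q.2)) k)
  have key : ∀ k, (volume.prod μ) (MAXS ν lam μ fun q => ⨅ j, G j q) * (lam : ℝ≥0∞) ^ p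
      ≤ (A : ℝ≥0∞) ^ p * ∫⁻ q, G k q ^ p ∂(volume.prod μ) := fun k =>
    le_trans (mul_le_mul_left (measure_mono (hsub k)) _) (hgood k lam hlam)
  refine le_trans (le_iInf key) ?_
  rw [← ennreal_mul_iInf (ENNReal.rpow_ne_top_of_nonneg hp0.le ENNReal.coe_ne_top)]
  apply mul_le_mul_right
  have heq : (∫⁻ q, (⨅ k, G k q) ^ p ∂(volume.prod μ))
      = ⨅ k, ∫⁻ q, G k q ^ p ∂(volume.prod μ) := by
    have h1 : ∀ q : EuclideanSpace ℝ (Fin n) × X, (⨅ k, G k q) ^ p = ⨅ k, (G k q) ^ p :=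
      fun q => ennreal_rpow_iInf hp0 _
    rw [lintegral_congr h1]
    apply lintegral_iInf
    · intro k
      exact ENNReal.continuous_rpow_const.measurable.comp (hGm k)
    · intro i j hij q
      exact ENNReal.rpow_le_rpow (hanti hij q) hp0.le
    · exact hfin
  rw [heq]

end Machine

section Ladder

variable {n : ℕ} {X : Type} [MeasurableSpace X]

theorem shape_iSup {γ : Type*} (x y d : ℝ≥0∞) {S : ℕ → Set γ} (q : γ) :
    (⨆ k, (x + (d * (S k).indicator 1 q + y))) = x + (d * (⋃ k, S k).indicator 1 q + y) := by
  by_cases h : q ∈ ⋃ k, S k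
  · obtain ⟨k0, hk0⟩ := mem_iUnion.mp h
    rw [Set.indicator_of_mem h]
    apply le_antisymm
    · refine iSup_le fun k => ?_
      by_cases hk : q ∈ S k
      · rw [Set.indicator_of_mem hk]
      · rw [Set.indicator_of_notMem hk]
        exact add_le_add_right (add_le_add_left (mul_le_mul_right (bot_le) d) y) x
    · refine le_iSup_of_le k0 (le_of_eq ?_)
      rw [Set.indicator_of_mem hk0]
  · have h' : ∀ k, q ∉ S k := fun k hk => h (mem_iUnion.mpr ⟨k, hk⟩)
    rw [Set.indicator_of_notMem h]
    calc (⨆ k, (x + (d * (S k).indicator 1 q + y)))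
        = ⨆ _ : ℕ, (x + (d * 0 + y)) :=
          iSup_congr fun k => by rw [Set.indicator_of_notMem (h' k)]
      _ = x + (d * 0 + y) := ciSup_const

theorem shape_iInf {γ : Type*} (x y d : ℝ≥0∞) {S : ℕ → Set γ} (q : γ) :
    (⨅ k, (x + (d * (S k).indicator 1 q + y))) = x + (d * (⋂ k, S k).indicator 1 q + y) := by
  by_cases h : q ∈ ⋂ k, S k
  · rw [Set.indicator_of_mem h]
    calc (⨅ k, (x + (d * (S k).indicator 1 q + y)))
        = ⨅ _ : ℕ, (x + (d * (1 : γ → ℝ≥0∞) q + y)) :=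
          iInf_congr fun k => by rw [Set.indicator_of_mem (mem_iInter.mp h k)]
      _ = x + (d * (1 : γ → ℝ≥0∞) q + y) := ciInf_const
  · obtain ⟨k0, hk0⟩ : ∃ k, q ∉ S k := by
      by_contra hc
      push_neg at hc
      exact h (mem_iInter.mpr hc)
    rw [Set.indicator_of_notMem h]
    apply le_antisymm
    · refine iInf_le_of_le k0 (le_of_eq ?_)
      rw [Set.indicator_of_notMem hk0]
    · refine le_iInf fun k => ?_
      exact add_le_add_right (add_le_add_left (mul_le_mul_right (bot_le) d) y) x

theorem ennreal_rpow_add_le {p : ℝ} (hp : 0 ≤ p) (a b : ℝ≥0∞) :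
    (a + b) ^ p ≤ 2 ^ p * (a ^ p + b ^ p) := by
  have key : ∀ x y : ℝ≥0∞, x ≤ y → (x + y) ^ p ≤ 2 ^ p * (x ^ p + y ^ p) := by
    intro x y h
    have h1 : x + y ≤ 2 * y := by rw [two_mul]; exact add_le_add_left h y
    have h2 : (x + y) ^ p ≤ (2 * y) ^ p := ENNReal.rpow_le_rpow h1 hp
    have h3 : (2 * y) ^ p = 2 ^ p * y ^ p := ENNReal.mul_rpow_of_nonneg 2 y hp
    exact le_trans h2 (le_trans (le_of_eq h3) (mul_le_mul_right le_add_self _))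
  rcases le_total a b with h | h
  · exact key a b h
  · have := key b a h
    rwa [add_comm b a, add_comm (b ^ p) (a ^ p)] at this

theorem indicator_mul_rpow {γ : Type*} {p : ℝ} (hp : 0 < p) (K : ℝ≥0∞) (B : Set γ) (q : γ) :
    ((K * B.indicator 1 q) ^ p) = K ^ p * B.indicator 1 q := by
  by_cases h : q ∈ B
  · rw [Set.indicator_of_mem h]
    simp
  · rw [Set.indicator_of_notMem h]
    rw [mul_zero, mul_zero]
    exact ENNReal.zero_rpow_of_pos hp

theorem lintegral_rpow_ne_top_of_le {p : ℝ} (hp : 0 < p)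
    {γ : Type*} [MeasurableSpace γ] {μ' : Measure γ}
    {H G : γ → ℝ≥0∞} (hHm : Measurable H)
    (hHfin : (∫⁻ q, H q ^ p ∂μ') ≠ ∞) {B : Set γ} (hBm : MeasurableSet B)
    (hBfin : μ' B ≠ ∞) (K : ℝ≥0)
    (hGle : ∀ q, G q ≤ H q + (K : ℝ≥0∞) * B.indicator 1 q) :
    (∫⁻ q, G q ^ p ∂μ') ≠ ∞ := by
  have h1 : (∫⁻ q, G q ^ p ∂μ')
      ≤ ∫⁻ q, 2 ^ p * (H q ^ p + (K : ℝ≥0∞) ^ p * B.indicator 1 q) ∂μ' := by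
    apply lintegral_mono
    intro q
    refine le_trans (ENNReal.rpow_le_rpow (hGle q) hp.le)
      (le_trans (ennreal_rpow_add_le hp.le _ _) (le_of_eq ?_))
    rw [indicator_mul_rpow hp]
  have h2 : (∫⁻ q, 2 ^ p * (H q ^ p + (K : ℝ≥0∞) ^ p * B.indicator 1 q) ∂μ')
      = 2 ^ p * ((∫⁻ q, H q ^ p ∂μ') + (K : ℝ≥0∞) ^ p * μ' B) := by
    have hm1 : Measurable fun q : γ => H q ^ p :=
      ENNReal.continuous_rpow_const.measurable.comp hHm
    rw [lintegral_const_mul]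
    · congr 1
      rw [lintegral_add_left hm1]
      congr 1
      rw [lintegral_const_mul _ (measurable_one.indicator hBm)]
      rw [lintegral_indicator_one hBm]
    · exact hm1.add (measurable_const.mul (measurable_one.indicator hBm))
  refine ne_top_of_le_ne_top ?_ (h1.trans (le_of_eq h2))
  apply ENNReal.mul_ne_top
  · exact ENNReal.rpow_ne_top_of_nonneg hp.le (by simp)
  · exact ENNReal.add_ne_top.mpr ⟨hHfin, ENNReal.mul_ne_top
      (ENNReal.rpow_ne_top_of_nonneg hp.le ENNReal.coe_ne_top) hBfin⟩

theorem good_sum {p : ℝ} {A : ℝ≥0} {ν : ℝ → Measure (EuclideanSpace ℝ (Fin n))}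
    {μ : Measure X} [SigmaFinite μ] (hp0 : 0 < p)
    (hmax : ∀ f : EuclideanSpace ℝ (Fin n) → ℝ≥0∞, Measurable f → ∀ lam : ℝ≥0, 0 < lam →
      volume {x : EuclideanSpace ℝ (Fin n) |
          (lam : ℝ≥0∞) < ⨆ (t : ℝ) (_ : 0 < t), ∫⁻ v, f (x - v) ∂(ν t)} ≤
        (A : ℝ≥0∞) ^ p * (∫⁻ x, f x ^ p ∂volume) / (lam : ℝ≥0∞) ^ p)
    {B : Set (EuclideanSpace ℝ (Fin n) × X)} (hB : Sliced B)
    (hBfin : (volume.prod μ) B ≠ ∞)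
    {ι : Type*} (s : Finset ι) (c : ι → ℝ≥0)
    (T : ι → Set (EuclideanSpace ℝ (Fin n) × X)) :
    (∀ i ∈ s, MeasurableSet (T i)) →
    ∀ H : EuclideanSpace ℝ (Fin n) × X → ℝ≥0∞, SlicedFun H →
      (∫⁻ q, H q ^ p ∂(volume.prod μ)) ≠ ∞ →
      GoodFn p A ν μ (fun q => H q + ∑ i ∈ s, (c i : ℝ≥0∞) * (T i ∩ B).indicator 1 q) := by
  classical
  induction s using Finset.induction_on with
  | empty =>
      intro _ H hH _
      have he : (fun q => H q + ∑ i ∈ (∅ : Finset ι),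
          (c i : ℝ≥0∞) * (T i ∩ B).indicator 1 q) = H := by
        funext q; simp
      rw [he]
      exact GoodFn.of_sliced hp0 hmax hH
  | @insert a s' ha ih =>
      intro hT H hH hHfin
      set Φ : Set (EuclideanSpace ℝ (Fin n) × X) → EuclideanSpace ℝ (Fin n) × X → ℝ≥0∞ :=
        fun T' q => H q + ((c a : ℝ≥0∞) * (T' ∩ B).indicator 1 q
          + ∑ i ∈ s', (c i : ℝ≥0∞) * (T i ∩ B).indicator 1 q) with hΦ
      have hgoal : (fun q => H q + ∑ i ∈ insert a s',
          (c i : ℝ≥0∞) * (T i ∩ B).indicator 1 q) = Φ (T a) := by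
        funext q
        rw [Finset.sum_insert ha]
      rw [hgoal]
      set C : Set (Set (EuclideanSpace ℝ (Fin n) × X)) :=
        {T' | MeasurableSet T' ∧ GoodFn p A ν μ (Φ T')} with hC
      have hindle : ∀ (T' : Set (EuclideanSpace ℝ (Fin n) × X)) (d : ℝ≥0∞)
          (q : EuclideanSpace ℝ (Fin n) × X),
          d * (T' ∩ B).indicator 1 q ≤ d * B.indicator 1 q := by
        intro T' d q
        apply mul_le_mul_right
        by_cases hq : q ∈ T' ∩ B
        · rw [Set.indicator_of_mem hq, Set.indicator_of_mem hq.2]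
        · rw [Set.indicator_of_notMem hq]; exact bot_le
      have hsl : {T' : Set (EuclideanSpace ℝ (Fin n) × X) | Sliced T'} ⊆ C := by
        intro T' hT'
        refine ⟨hT'.measurableSet, ?_⟩
        have hH' : SlicedFun (fun q => H q + (c a : ℝ≥0∞) * (T' ∩ B).indicator 1 q) :=
          hH.add_indicator (hT'.inter hB) _
        have hH'fin : (∫⁻ q, (fun q => H q + (c a : ℝ≥0∞) * (T' ∩ B).indicator 1 q) q ^ p
            ∂(volume.prod μ)) ≠ ∞ := by
          apply lintegral_rpow_ne_top_of_le hp0 hH.measurable hHfin hB.measurableSet hBfin (c a)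
          intro q
          exact add_le_add_right (hindle T' _ q) _
        have h2 := ih (fun i hi => hT i (Finset.mem_insert_of_mem hi)) _ hH' hH'fin
        have heq : (fun q => (fun q => H q + (c a : ℝ≥0∞) * (T' ∩ B).indicator 1 q) q
            + ∑ i ∈ s', (c i : ℝ≥0∞) * (T i ∩ B).indicator 1 q) = Φ T' := by
          funext q; rw [hΦ]; ring
        rwa [heq] at h2
      have hTmeas' : ∀ i ∈ s', MeasurableSet (T i) :=
        fun i hi => hT i (Finset.mem_insert_of_mem hi)
      have hrestmeas : Measurable fun q : EuclideanSpace ℝ (Fin n) × X =>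
          ∑ i ∈ s', (c i : ℝ≥0∞) * (T i ∩ B).indicator 1 q := by
        apply Finset.measurable_sum
        intro i hi
        exact measurable_const.mul
          (measurable_one.indicator ((hTmeas' i hi).inter hB.measurableSet))
      have hΦmeas : ∀ T' : Set (EuclideanSpace ℝ (Fin n) × X),
          MeasurableSet T' → Measurable (Φ T') := by
        intro T' hT'
        exact hH.measurable.add ((measurable_const.mul
          (measurable_one.indicator (hT'.inter hB.measurableSet))).add hrestmeas)
      have hmc : IsMonoClass C := by
        constructor
        · intro F hF hFn
          refine ⟨MeasurableSet.iUnion fun k => (hFn k).1, ?_⟩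
          have h1 : (⋃ k, F k) ∩ B = ⋃ k, (F k ∩ B) := by rw [iUnion_inter]
          have heq : (fun q => ⨆ k, Φ (F k) q) = Φ (⋃ k, F k) := by
            funext q
            simp only [hΦ]
            rw [h1]
            exact shape_iSup _ _ _ q
          rw [← heq]
          refine GoodFn.sup hp0 (fun k => hΦmeas _ (hFn k).1) ?_ (fun k => (hFn k).2)
          intro i j hij q
          simp only [hΦ]
          apply add_le_add_right
          apply add_le_add_left
          apply mul_le_mul_right
          by_cases hq : q ∈ F i ∩ B
          · rw [Set.indicator_of_mem hq,
              Set.indicator_of_mem (show q ∈ F j ∩ B from ⟨hF hij hq.1, hq.2⟩)]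
          · rw [Set.indicator_of_notMem hq]; exact bot_le
        · intro F hF hFn
          refine ⟨MeasurableSet.iInter fun k => (hFn k).1, ?_⟩
          have h1 : (⋂ k, F k) ∩ B = ⋂ k, (F k ∩ B) := by
            ext z
            simp only [mem_inter_iff, mem_iInter]
            constructor
            · rintro ⟨hz1, hz2⟩ k
              exact ⟨hz1 k, hz2⟩
            · intro h
              exact ⟨fun k => (h k).1, (h 0).2⟩
          have heq : (fun q => ⨅ k, Φ (F k) q) = Φ (⋂ k, F k) := by
            funext q
            simp only [hΦ]
            rw [h1]
            exact shape_iInf _ _ _ q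
          rw [← heq]
          refine GoodFn.inf hp0 (fun k => hΦmeas _ (hFn k).1) ?_ ?_ (fun k => (hFn k).2)
          · intro i j hij q
            simp only [hΦ]
            apply add_le_add_right
            apply add_le_add_left
            apply mul_le_mul_right
            by_cases hq : q ∈ F j ∩ B
            · rw [Set.indicator_of_mem hq,
                Set.indicator_of_mem (show q ∈ F i ∩ B from ⟨hF hij hq.1, hq.2⟩)]
            · rw [Set.indicator_of_notMem hq]; exact bot_le
          · apply lintegral_rpow_ne_top_of_le hp0 hH.measurable hHfin hB.measurableSet hBfin
              (c a + ∑ i ∈ s', c i)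
            intro q
            simp only [hΦ]
            apply add_le_add_right
            have hb1 : (c a : ℝ≥0∞) * (F 0 ∩ B).indicator 1 q
                ≤ (c a : ℝ≥0∞) * B.indicator 1 q := hindle _ _ q
            have hb2 : (∑ i ∈ s', (c i : ℝ≥0∞) * (T i ∩ B).indicator 1 q)
                ≤ ∑ i ∈ s', (c i : ℝ≥0∞) * B.indicator 1 q :=
              Finset.sum_le_sum fun i _ => hindle _ _ q
            refine le_trans (add_le_add hb1 hb2) (le_of_eq ?_)
            rw [← Finset.sum_mul, ← add_mul]
            congr 1
            rw [ENNReal.coe_add, ENNReal.coe_finset_sum]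
      have hgen : MeasurableSet[MeasurableSpace.generateFrom
          {T' : Set (EuclideanSpace ℝ (Fin n) × X) | Sliced T'}] (T a) := by
        have hle : (inferInstance : MeasurableSpace (EuclideanSpace ℝ (Fin n) × X))
            ≤ MeasurableSpace.generateFrom
              {T' : Set (EuclideanSpace ℝ (Fin n) × X) | Sliced T'} := by
          rw [← generateFrom_prod]
          apply MeasurableSpace.generateFrom_mono
          rintro S hS
          rw [mem_image2] at hS
          obtain ⟨u, hu, v, hv, rfl⟩ := hS
          exact Sliced.rect hu hv
        exact hle _ (hT a (Finset.mem_insert_self a s'))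
      refine (isMonoClass_generateFrom_subset ?_ ?_ ?_ hmc hsl (T a) hgen).2
      · show Sliced (Set.univ : Set (EuclideanSpace ℝ (Fin n) × X))
        exact Sliced.univ
      · intro S hS
        show Sliced Sᶜ
        exact Sliced.compl hS
      · intro S hS T'' hT''
        show Sliced (S ∩ T'')
        exact Sliced.inter hS hT''

end Ladder

section GoodAll

variable {n : ℕ} {X : Type} [MeasurableSpace X]

theorem good_all {p : ℝ} {A : ℝ≥0} {ν : ℝ → Measure (EuclideanSpace ℝ (Fin n))}
    {μ : Measure X} [SigmaFinite μ] (hp0 : 0 < p)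
    (hmax : ∀ f : EuclideanSpace ℝ (Fin n) → ℝ≥0∞, Measurable f → ∀ lam : ℝ≥0, 0 < lam →
      volume {x : EuclideanSpace ℝ (Fin n) |
          (lam : ℝ≥0∞) < ⨆ (t : ℝ) (_ : 0 < t), ∫⁻ v, f (x - v) ∂(ν t)} ≤
        (A : ℝ≥0∞) ^ p * (∫⁻ x, f x ^ p ∂volume) / (lam : ℝ≥0∞) ^ p)
    {G : EuclideanSpace ℝ (Fin n) × X → ℝ≥0∞} (hG : Measurable G) :
    GoodFn p A ν μ G := by
  set B : ℕ → Set (EuclideanSpace ℝ (Fin n) × X) :=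
    fun J => (closedBall (0 : EuclideanSpace ℝ (Fin n)) (J : ℝ)) ×ˢ (spanningSets μ J) with hBdef
  have hBsl : ∀ J, Sliced (B J) :=
    fun J => Sliced.rect measurableSet_closedBall (measurableSet_spanningSets μ J)
  have hBfin : ∀ J, (volume.prod μ) (B J) ≠ ∞ := by
    intro J
    rw [hBdef]
    simp only []
    rw [Measure.prod_prod]
    exact ENNReal.mul_ne_top measure_closedBall_lt_top.ne (measure_spanningSets_lt_top μ J).ne
  have stepA : ∀ (ψ : SimpleFunc (EuclideanSpace ℝ (Fin n) × X) ℝ≥0∞),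
      (∀ q, ψ q ≠ ∞) → ∀ J, GoodFn p A ν μ (fun q => ψ q * (B J).indicator 1 q) := by
    intro ψ hψ J
    have h0fin : (∫⁻ q, (fun _ : EuclideanSpace ℝ (Fin n) × X => (0 : ℝ≥0∞)) q ^ p
        ∂(volume.prod μ)) ≠ ∞ := by
      simp [ENNReal.zero_rpow_of_pos hp0]
    have key := good_sum hp0 hmax (hBsl J) (hBfin J) ψ.range (fun y => y.toNNReal)
      (fun y => ψ ⁻¹' {y}) (fun y _ => ψ.measurableSet_fiber y)
      (fun _ => 0) SlicedFun.zero h0fin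
    have hrep : (fun q => (fun _ : EuclideanSpace ℝ (Fin n) × X => (0 : ℝ≥0∞)) q
        + ∑ y ∈ ψ.range, ((y.toNNReal : ℝ≥0∞)) * ((ψ ⁻¹' {y}) ∩ B J).indicator 1 q)
        = fun q => ψ q * (B J).indicator 1 q := by
      funext q
      simp only [zero_add]
      by_cases hq : q ∈ B J
      · rw [Set.indicator_of_mem hq]
        have hterm : ∀ y ∈ ψ.range, ((y.toNNReal : ℝ≥0∞)) * ((ψ ⁻¹' {y}) ∩ B J).indicator 1 q
            = if ψ q = y then y else 0 := by
          intro y hy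
          obtain ⟨q', hq'⟩ := SimpleFunc.mem_range.mp hy
          by_cases hqy : ψ q = y
          · rw [if_pos hqy]
            have hmem : q ∈ (ψ ⁻¹' {y}) ∩ B J := ⟨hqy, hq⟩
            rw [Set.indicator_of_mem hmem]
            simp only [Pi.one_apply, mul_one]
            exact ENNReal.coe_toNNReal (by rw [← hq']; exact hψ q')
          · rw [if_neg hqy]
            rw [Set.indicator_of_notMem (fun hm => hqy hm.1), mul_zero]
        rw [Finset.sum_congr rfl hterm]
        rw [Finset.sum_ite_eq ψ.range (ψ q) (fun y => y)]
        rw [if_pos (ψ.mem_range_self q)]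
        simp
      · rw [Set.indicator_of_notMem hq, mul_zero]
        refine Finset.sum_eq_zero fun y _ => ?_
        rw [Set.indicator_of_notMem (fun hm => hq hm.2), mul_zero]
    rw [← hrep]
    exact key
  have stepB : ∀ J, GoodFn p A ν μ (fun q => G q * (B J).indicator 1 q) := by
    intro J
    have heq : (fun q => G q * (B J).indicator 1 q)
        = fun q => ⨆ k, (SimpleFunc.eapprox G k q * (B J).indicator 1 q) := by
      funext q
      rw [← SimpleFunc.iSup_eapprox_apply hG q, ENNReal.iSup_mul]
    rw [heq]
    refine GoodFn.sup hp0 ?_ ?_ ?_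
    · intro k
      exact (SimpleFunc.measurable _).mul (measurable_one.indicator (hBsl J).measurableSet)
    · intro i j hij q
      exact mul_le_mul_left (SimpleFunc.monotone_eapprox G hij q) _
    · intro k
      exact stepA _ (fun q => (SimpleFunc.eapprox_lt_top G k q).ne) J
  have hGeq : G = fun q => ⨆ J, G q * (B J).indicator 1 q := by
    funext q
    obtain ⟨J1, hJ1⟩ := exists_nat_ge ‖q.1‖
    have hsp : q.2 ∈ ⋃ i, spanningSets μ i := by
      rw [iUnion_spanningSets]; exact mem_univ q.2
    obtain ⟨J2, hJ2⟩ := mem_iUnion.mp hsp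
    have hq : q ∈ B (max J1 J2) := by
      constructor
      · rw [mem_closedBall_zero_iff]
        calc ‖q.1‖ ≤ (J1 : ℝ) := hJ1
        _ ≤ ((max J1 J2 : ℕ) : ℝ) := by exact_mod_cast le_max_left J1 J2
      · exact monotone_spanningSets μ (le_max_right J1 J2) hJ2
    apply le_antisymm
    · refine le_iSup_of_le (max J1 J2) (le_of_eq ?_)
      rw [Set.indicator_of_mem hq]
      simp
    · refine iSup_le fun J => ?_
      by_cases h : q ∈ B J
      · rw [Set.indicator_of_mem h]; simp
      · rw [Set.indicator_of_notMem h, mul_zero]; exact bot_le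
  rw [hGeq]
  refine GoodFn.sup hp0 ?_ ?_ stepB
  · intro J
    exact hG.mul (measurable_one.indicator (hBsl J).measurableSet)
  · intro i j hij q
    apply mul_le_mul_right
    by_cases h : q ∈ B i
    · have h2 : q ∈ B j := ⟨closedBall_subset_closedBall (by exact_mod_cast hij) h.1,
        monotone_spanningSets μ hij h.2⟩
      rw [Set.indicator_of_mem h, Set.indicator_of_mem h2]
    · rw [Set.indicator_of_notMem h]; exact bot_le

end GoodAll

theorem measure_preimage_of_inv {X : Type} [MeasurableSpace X] {μ : Measure X} {h h' : X → X}
    (mp : MeasurePreserving h μ μ) (mp' : MeasurePreserving h' μ μ)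
    (hh' : ∀ x, h (h' x) = x) (S : Set X) :
    μ (h ⁻¹' S) = μ S := by
  have key : ∀ g : X → X, MeasurePreserving g μ μ → ∀ T : Set X, μ (g ⁻¹' T) ≤ μ T := by
    intro g hg T
    calc μ (g ⁻¹' T) ≤ μ (g ⁻¹' (toMeasurable μ T)) :=
        measure_mono (preimage_mono (subset_toMeasurable μ T))
      _ = μ (toMeasurable μ T) :=
        hg.measure_preimage (measurableSet_toMeasurable μ T).nullMeasurableSet
      _ = μ T := measure_toMeasurable T
  apply le_antisymm (key h mp S)
  have hSeq : S ⊆ h' ⁻¹' (h ⁻¹' S) := by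
    intro x hx
    show h (h' x) ∈ S
    rw [hh' x]
    exact hx
  calc μ S ≤ μ (h' ⁻¹' (h ⁻¹' S)) := measure_mono hSeq
    _ ≤ μ (h ⁻¹' S) := key h' mp' _

/-- **Calderón transference principle (commutative case, weak type (p,p)).**
If the maximal operator associated to a family `(ν_t)_{t>0}` of probability measures on `ℝⁿ`,
each supported in the ball of radius `C·t`, satisfies a weak type `(p,p)` inequality on
`L^p(ℝⁿ)`, then for every `ℝⁿ`-measure-preserving system `(X, μ, π)` the corresponding
ergodic maximal operator satisfies the same weak type `(p,p)` inequality. -/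
theorem transference_weak_type
    (n : ℕ) (hn : 1 ≤ n) (p : ℝ) (hp : 1 ≤ p) (C : ℝ) (hC : 0 < C) (A : ℝ≥0) (hA : 0 < A)
    (ν : ℝ → Measure (EuclideanSpace ℝ (Fin n)))
    (hprob : ∀ t : ℝ, 0 < t → IsProbabilityMeasure (ν t))
    (hsupp : ∀ t : ℝ, 0 < t → ν t (closedBall (0 : EuclideanSpace ℝ (Fin n)) (C * t))ᶜ = 0)
    (hmax : ∀ f : EuclideanSpace ℝ (Fin n) → ℝ≥0∞, Measurable f → ∀ lam : ℝ≥0, 0 < lam →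
      volume {x : EuclideanSpace ℝ (Fin n) |
          (lam : ℝ≥0∞) < ⨆ (t : ℝ) (_ : 0 < t), ∫⁻ v, f (x - v) ∂(ν t)} ≤
        (A : ℝ≥0∞) ^ p * (∫⁻ x, f x ^ p ∂volume) / (lam : ℝ≥0∞) ^ p) :
    ∀ (X : Type) [MeasurableSpace X] (μ : Measure X), SigmaFinite μ →
      ∀ π : EuclideanSpace ℝ (Fin n) → X → X,
        Measurable (fun q : EuclideanSpace ℝ (Fin n) × X => π q.1 q.2) →
        (∀ x, π 0 x = x) →
        (∀ u v x, π (u + v) x = π u (π v x)) →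
        (∀ v, MeasurePreserving (π v) μ μ) →
        ∀ f : X → ℝ≥0∞, Measurable f → ∀ lam : ℝ≥0, 0 < lam →
          μ {x : X | (lam : ℝ≥0∞) < ⨆ (t : ℝ) (_ : 0 < t), ∫⁻ v, f (π v x) ∂(ν t)} ≤
            (A : ℝ≥0∞) ^ p * (∫⁻ x, f x ^ p ∂μ) / (lam : ℝ≥0∞) ^ p := by
  intro X mX μ hσ π hπmeas hπ0 hπadd hπmp f hf lam hlam
  haveI : SigmaFinite μ := hσ
  have hp0 : (0 : ℝ) < p := lt_of_lt_of_le one_pos hp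
  have hlamp_ne0 : ((lam : ℝ≥0∞)) ^ p ≠ 0 := by
    simp [ENNReal.rpow_eq_zero_iff, hlam.ne']
  have hlamp_netop : ((lam : ℝ≥0∞)) ^ p ≠ ∞ :=
    ENNReal.rpow_ne_top_of_nonneg hp0.le ENNReal.coe_ne_top
  have hAp_ne0 : ((A : ℝ≥0∞)) ^ p ≠ 0 := by
    simp [ENNReal.rpow_eq_zero_iff, hA.ne']
  have hAp_netop : ((A : ℝ≥0∞)) ^ p ≠ ∞ :=
    ENNReal.rpow_ne_top_of_nonneg hp0.le ENNReal.coe_ne_top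
  set E : Set X :=
    {x : X | (lam : ℝ≥0∞) < ⨆ (t : ℝ) (_ : 0 < t), ∫⁻ v, f (π v x) ∂(ν t)} with hE
  set Es : ℕ → Set X := fun m =>
    {x : X | (lam : ℝ≥0∞) < ⨆ (t : ℝ) (_ : 0 < t ∧ t ≤ (m : ℝ) + 1),
      ∫⁻ v, f (π v x) ∂(ν t)} with hEs
  have hEsmono : Monotone Es := by
    intro i j hij x hx
    simp only [hEs, mem_setOf_eq] at hx ⊢
    obtain ⟨t, ht⟩ := lt_iSup_iff.mp hx
    obtain ⟨hcond, hval⟩ := lt_iSup_iff.mp ht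
    refine lt_iSup_iff.mpr ⟨t, lt_iSup_iff.mpr ⟨⟨hcond.1, ?_⟩, hval⟩⟩
    refine le_trans hcond.2 ?_
    have : (i : ℝ) ≤ (j : ℝ) := Nat.cast_le.mpr hij
    linarith
  have hEdecomp : E = ⋃ m, Es m := by
    ext x
    simp only [hE, hEs, mem_setOf_eq, mem_iUnion]
    constructor
    · intro hx
      obtain ⟨t, ht⟩ := lt_iSup_iff.mp hx
      obtain ⟨hpos, hval⟩ := lt_iSup_iff.mp ht
      obtain ⟨m, hm⟩ := exists_nat_ge t
      exact ⟨m, lt_iSup_iff.mpr ⟨t, lt_iSup_iff.mpr ⟨⟨hpos, by linarith⟩, hval⟩⟩⟩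
    · rintro ⟨m, hx⟩
      obtain ⟨t, ht⟩ := lt_iSup_iff.mp hx
      obtain ⟨hcond, hval⟩ := lt_iSup_iff.mp ht
      exact lt_iSup_iff.mpr ⟨t, lt_iSup_iff.mpr ⟨hcond.1, hval⟩⟩
  rw [hEdecomp, hEsmono.measure_iUnion]
  refine iSup_le fun m => ?_
  by_cases hfin : (∫⁻ x, f x ^ p ∂μ) = ∞
  · rw [hfin, ENNReal.mul_top hAp_ne0, div_eq_mul_inv,
      ENNReal.top_mul (ENNReal.inv_ne_zero.mpr hlamp_netop)]
    exact le_top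
  set s : ℝ := (m : ℝ) + 1 with hs
  have hs0 : (0 : ℝ) < s := by positivity
  have main : ∀ k : ℕ,
      μ (Es m) * (lam : ℝ≥0∞) ^ p
        * volume (closedBall (0 : EuclideanSpace ℝ (Fin n)) ((k : ℝ) + 1))
      ≤ (A : ℝ≥0∞) ^ p * (∫⁻ x, f x ^ p ∂μ)
        * volume (closedBall (0 : EuclideanSpace ℝ (Fin n)) ((k : ℝ) + 1 + C * s)) := by
    intro k
    set R : ℝ := (k : ℝ) + 1 with hR
    have hR0 : (0 : ℝ) < R := by positivity
    set G : EuclideanSpace ℝ (Fin n) × X → ℝ≥0∞ := fun q =>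
      (closedBall (0 : EuclideanSpace ℝ (Fin n)) (R + C * s)).indicator 1 q.1
        * f (π q.1 q.2) with hG
    have hGmeas : Measurable G := by
      apply Measurable.mul
      · exact (measurable_one.indicator measurableSet_closedBall).comp measurable_fst
      · exact hf.comp hπmeas
    have hGood := good_all (μ := μ) hp0 hmax hGmeas lam hlam
    have hcont : ∀ w : EuclideanSpace ℝ (Fin n), w ∈ closedBall (0 : EuclideanSpace ℝ (Fin n)) R →
        ∀ x : X, π w x ∈ Es m → (w, x) ∈ MAXS ν lam μ G := by
      intro w hw x hx
      simp only [hEs, mem_setOf_eq] at hx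
      obtain ⟨t, ht⟩ := lt_iSup_iff.mp hx
      obtain ⟨⟨ht0, hts⟩, hval⟩ := lt_iSup_iff.mp ht
      have heqint : (∫⁻ v, f (π v (π w x)) ∂(ν t)) = ∫⁻ v, G (w + v, x) ∂(ν t) := by
        have hae : ∀ᵐ v ∂(ν t), v ∈ closedBall (0 : EuclideanSpace ℝ (Fin n)) (C * t) := by
          rw [ae_iff]
          exact hsupp t ht0
        apply lintegral_congr_ae
        filter_upwards [hae] with v hv
        have hcomp : π v (π w x) = π (w + v) x := by
          rw [add_comm w v]
          exact (hπadd v w x).symm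
        have hball : w + v ∈ closedBall (0 : EuclideanSpace ℝ (Fin n)) (R + C * s) := by
          rw [mem_closedBall_zero_iff]
          have h1 : ‖w + v‖ ≤ ‖w‖ + ‖v‖ := norm_add_le w v
          have hw' : ‖w‖ ≤ R := mem_closedBall_zero_iff.mp hw
          have hv' : ‖v‖ ≤ C * t := mem_closedBall_zero_iff.mp hv
          have hts' : C * t ≤ C * s := mul_le_mul_of_nonneg_left hts hC.le
          linarith
        simp only [hG]
        rw [Set.indicator_of_mem hball, ← hcomp]
        simp
      show (lam : ℝ≥0∞) < ⨆ (t' : ℝ) (_ : 0 < t'), ∫⁻ v, G ((w, x).1 + v, (w, x).2) ∂(ν t')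
      refine lt_of_lt_of_le ?_ (le_iSup_of_le t (le_iSup_of_le ht0 le_rfl))
      show (lam : ℝ≥0∞) < ∫⁻ v, G (w + v, x) ∂(ν t)
      rw [← heqint]
      exact hval
    set SS : Set (EuclideanSpace ℝ (Fin n) × X) := MAXS ν lam μ G ∩
      ((closedBall (0 : EuclideanSpace ℝ (Fin n)) R) ×ˢ (univ : Set X)) with hSS
    set V : Set (EuclideanSpace ℝ (Fin n) × X) := toMeasurable (volume.prod μ) SS with hV
    have hVmeas : MeasurableSet V := measurableSet_toMeasurable _ _
    have hslice : ∀ w ∈ closedBall (0 : EuclideanSpace ℝ (Fin n)) R,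
        μ (Es m) ≤ μ (Prod.mk w ⁻¹' V) := by
      intro w hw
      have h1 : μ (Es m) = μ ((fun x => π w x) ⁻¹' (Es m)) := by
        symm
        apply measure_preimage_of_inv (hπmp w) (hπmp (-w))
        intro x
        rw [← hπadd w (-w) x, add_neg_cancel]
        exact hπ0 x
      rw [h1]
      apply measure_mono
      intro x hx
      have h2 : (w, x) ∈ SS := ⟨hcont w hw x hx, ⟨hw, mem_univ x⟩⟩
      exact subset_toMeasurable _ _ h2
    have hmeasslice : Measurable fun w => μ (Prod.mk w ⁻¹' V) :=
      measurable_measure_prodMk_left hVmeas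
    have hfub : volume (closedBall (0 : EuclideanSpace ℝ (Fin n)) R) * μ (Es m)
        ≤ (volume.prod μ) V := by
      calc volume (closedBall (0 : EuclideanSpace ℝ (Fin n)) R) * μ (Es m)
          = ∫⁻ _ in closedBall (0 : EuclideanSpace ℝ (Fin n)) R, μ (Es m) ∂volume := by
            rw [setLIntegral_const, mul_comm]
        _ ≤ ∫⁻ w in closedBall (0 : EuclideanSpace ℝ (Fin n)) R,
              μ (Prod.mk w ⁻¹' V) ∂volume := setLIntegral_mono hmeasslice hslice
        _ ≤ ∫⁻ w, μ (Prod.mk w ⁻¹' V) ∂volume := setLIntegral_le_lintegral _ _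
        _ = (volume.prod μ) V := (Measure.prod_apply hVmeas).symm
    have hGint : (∫⁻ q, G q ^ p ∂(volume.prod μ))
        = volume (closedBall (0 : EuclideanSpace ℝ (Fin n)) (R + C * s))
          * ∫⁻ x, f x ^ p ∂μ := by
      have hpt : ∀ q : EuclideanSpace ℝ (Fin n) × X, G q ^ p
          = (closedBall (0 : EuclideanSpace ℝ (Fin n)) (R + C * s)).indicator 1 q.1
            * (f (π q.1 q.2)) ^ p := by
        intro q
        simp only [hG]
        by_cases hq : q.1 ∈ closedBall (0 : EuclideanSpace ℝ (Fin n)) (R + C * s)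
        · rw [Set.indicator_of_mem hq]
          simp
        · rw [Set.indicator_of_notMem hq]
          rw [zero_mul, zero_mul]
          exact ENNReal.zero_rpow_of_pos hp0
      have hmeas2 : AEMeasurable (fun q : EuclideanSpace ℝ (Fin n) × X =>
          (closedBall (0 : EuclideanSpace ℝ (Fin n)) (R + C * s)).indicator 1 q.1
            * (f (π q.1 q.2)) ^ p) (volume.prod μ) := by
        apply Measurable.aemeasurable
        exact ((measurable_one.indicator measurableSet_closedBall).comp measurable_fst).mul
          (ENNReal.continuous_rpow_const.measurable.comp (hf.comp hπmeas))
      rw [lintegral_congr hpt, lintegral_prod _ hmeas2]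
      have hin : ∀ w : EuclideanSpace ℝ (Fin n),
          (∫⁻ x, (closedBall (0 : EuclideanSpace ℝ (Fin n)) (R + C * s)).indicator 1 w
            * (f (π w x)) ^ p ∂μ)
          = (closedBall (0 : EuclideanSpace ℝ (Fin n)) (R + C * s)).indicator 1 w
            * ∫⁻ x, f x ^ p ∂μ := by
        intro w
        have hmw : Measurable fun x : X => (f (π w x)) ^ p := by
          apply ENNReal.continuous_rpow_const.measurable.comp
          exact hf.comp (hπmeas.comp
            (measurable_prodMk_left :
              Measurable fun x : X => ((w : EuclideanSpace ℝ (Fin n)), x)))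
        rw [lintegral_const_mul _ hmw]
        congr 1
        exact (hπmp w).lintegral_comp (f := fun y => f y ^ p)
          (ENNReal.continuous_rpow_const.measurable.comp hf)
      rw [lintegral_congr hin, lintegral_mul_const _ (measurable_one.indicator
        measurableSet_closedBall), lintegral_indicator_one measurableSet_closedBall, mul_comm]
    calc μ (Es m) * (lam : ℝ≥0∞) ^ p
          * volume (closedBall (0 : EuclideanSpace ℝ (Fin n)) ((k : ℝ) + 1))
        = volume (closedBall (0 : EuclideanSpace ℝ (Fin n)) R) * μ (Es m)
          * (lam : ℝ≥0∞) ^ p := by rw [hR]; ring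
      _ ≤ (volume.prod μ) V * (lam : ℝ≥0∞) ^ p := mul_le_mul_left hfub _
      _ = (volume.prod μ) SS * (lam : ℝ≥0∞) ^ p := by rw [hV, measure_toMeasurable]
      _ ≤ (volume.prod μ) (MAXS ν lam μ G) * (lam : ℝ≥0∞) ^ p :=
          mul_le_mul_left (measure_mono inter_subset_left) _
      _ ≤ (A : ℝ≥0∞) ^ p * ∫⁻ q, G q ^ p ∂(volume.prod μ) := hGood
      _ = (A : ℝ≥0∞) ^ p * (∫⁻ x, f x ^ p ∂μ)
          * volume (closedBall (0 : EuclideanSpace ℝ (Fin n)) ((k : ℝ) + 1 + C * s)) := by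
          rw [hGint, hR]; ring
  have hball : ∀ r : ℝ, 0 ≤ r → volume (closedBall (0 : EuclideanSpace ℝ (Fin n)) r)
      = ENNReal.ofReal (r ^ n) * volume (ball (0 : EuclideanSpace ℝ (Fin n)) 1) := by
    intro r hr
    rw [Measure.addHaar_closedBall _ _ hr, finrank_euclideanSpace_fin]
  set c1 := volume (ball (0 : EuclideanSpace ℝ (Fin n)) 1) with hc1
  have hc1_0 : c1 ≠ 0 := (measure_ball_pos volume _ one_pos).ne'
  have hc1_top : c1 ≠ ∞ := measure_ball_lt_top.ne
  have hkey : ∀ k : ℕ, μ (Es m) * (lam : ℝ≥0∞) ^ p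
      ≤ (A : ℝ≥0∞) ^ p * (∫⁻ x, f x ^ p ∂μ)
        * ENNReal.ofReal ((((k : ℝ) + 1 + C * s) / ((k : ℝ) + 1)) ^ n) := by
    intro k
    have h0 := main k
    set R : ℝ := (k : ℝ) + 1 with hR
    have hR0 : (0 : ℝ) < R := by positivity
    rw [hball R hR0.le, hball (R + C * s) (by positivity)] at h0
    have hfact : ENNReal.ofReal ((R + C * s) ^ n)
        = ENNReal.ofReal (((R + C * s) / R) ^ n) * ENNReal.ofReal (R ^ n) := by
      rw [← ENNReal.ofReal_mul (by positivity)]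
      congr 1
      rw [← mul_pow, div_mul_cancel₀]
      exact hR0.ne'
    rw [hfact] at h0
    have hprod_ne0 : (ENNReal.ofReal (R ^ n) * c1) ≠ 0 := by
      apply mul_ne_zero _ hc1_0
      simp only [ne_eq, ENNReal.ofReal_eq_zero, not_le]
      positivity
    have hprod_netop : (ENNReal.ofReal (R ^ n) * c1) ≠ ∞ :=
      ENNReal.mul_ne_top ENNReal.ofReal_ne_top hc1_top
    have h1 : (μ (Es m) * (lam : ℝ≥0∞) ^ p) * (ENNReal.ofReal (R ^ n) * c1)
        ≤ ((A : ℝ≥0∞) ^ p * (∫⁻ x, f x ^ p ∂μ)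
          * ENNReal.ofReal (((R + C * s) / R) ^ n)) * (ENNReal.ofReal (R ^ n) * c1) := by
      refine le_trans (le_of_eq (by ring)) (le_trans h0 (le_of_eq (by ring)))
    exact (ENNReal.mul_le_mul_iff_left hprod_ne0 hprod_netop).mp h1
  have hconst_netop : (A : ℝ≥0∞) ^ p * (∫⁻ x, f x ^ p ∂μ) ≠ ∞ :=
    ENNReal.mul_ne_top hAp_netop hfin
  have hreal : Filter.Tendsto (fun k : ℕ => (((k : ℝ) + 1 + C * s) / ((k : ℝ) + 1)) ^ n)
      Filter.atTop (nhds 1) := by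
    have h2 : ∀ k : ℕ, (((k : ℝ) + 1 + C * s) / ((k : ℝ) + 1))
        = 1 + (C * s) / ((k : ℝ) + 1) := by
      intro k
      have : ((k : ℝ) + 1) ≠ 0 := by positivity
      field_simp
    have h3 : Filter.Tendsto (fun k : ℕ => (C * s) / ((k : ℝ) + 1)) Filter.atTop (nhds 0) := by
      have h4 := (tendsto_const_div_atTop_nhds_zero_nat (C * s)).comp
        (Filter.tendsto_add_atTop_nat 1)
      have h5 : ((fun n : ℕ => (C * s) / (n : ℝ)) ∘ fun k : ℕ => k + 1)
          = fun k : ℕ => (C * s) / ((k : ℝ) + 1) := by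
        funext k
        simp [Function.comp]
      rwa [h5] at h4
    have h6 : Filter.Tendsto (fun k : ℕ => 1 + (C * s) / ((k : ℝ) + 1))
        Filter.atTop (nhds (1 + 0)) := Filter.Tendsto.const_add 1 h3
    rw [add_zero] at h6
    have h7 : Filter.Tendsto (fun k : ℕ => (1 + (C * s) / ((k : ℝ) + 1)) ^ n)
        Filter.atTop (nhds (1 ^ n)) := h6.pow n
    rw [one_pow] at h7
    have h8 : (fun k : ℕ => (1 + (C * s) / ((k : ℝ) + 1)) ^ n)
        = fun k : ℕ => (((k : ℝ) + 1 + C * s) / ((k : ℝ) + 1)) ^ n := by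
      funext k
      rw [h2 k]
    rwa [h8] at h7
  have htend : Filter.Tendsto (fun k : ℕ => (A : ℝ≥0∞) ^ p * (∫⁻ x, f x ^ p ∂μ)
      * ENNReal.ofReal ((((k : ℝ) + 1 + C * s) / ((k : ℝ) + 1)) ^ n)) Filter.atTop
      (nhds ((A : ℝ≥0∞) ^ p * (∫⁻ x, f x ^ p ∂μ) * 1)) := by
    have h9 : Filter.Tendsto (fun k : ℕ =>
        ENNReal.ofReal ((((k : ℝ) + 1 + C * s) / ((k : ℝ) + 1)) ^ n)) Filter.atTop
        (nhds (ENNReal.ofReal 1)) := (ENNReal.continuous_ofReal.tendsto 1).comp hreal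
    rw [ENNReal.ofReal_one] at h9
    exact ENNReal.Tendsto.const_mul h9 (Or.inr hconst_netop)
  have hlim : μ (Es m) * (lam : ℝ≥0∞) ^ p
      ≤ (A : ℝ≥0∞) ^ p * (∫⁻ x, f x ^ p ∂μ) * 1 :=
    ge_of_tendsto htend (Filter.Eventually.of_forall hkey)
  rw [mul_one] at hlim
  rw [ENNReal.le_div_iff_mul_le (Or.inl hlamp_ne0) (Or.inl hlamp_netop)]
  exact hlim
end

section
/- Let n ≥ 1 and 1 < p ≤ ∞. There exists a constant C_{p,n} (depending only on p and n) such that for every ℝⁿ-measure-preserving system (X, μ, π) and every nonnegative measurable function f : X → [0, ∞], one has ‖x ↦ sup_{r>0} A_r f(x)‖_{L^p(X, μ)} ≤ C_{p,n} ‖f‖_{L^p(X, μ)}, where A_r f(x) = |B(0, r)|⁻¹ ∫_{B(0, r)} f(π(v, x)) dv. -/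
open MeasureTheory Metric
open scoped NNReal ENNReal

/-- The `L^p` norm (for `p` possibly `∞`) of a `ℝ≥0∞`-valued function. -/
noncomputable def lpNormENN {X : Type*} [MeasurableSpace X] (μ : Measure X) (p : ℝ≥0∞)
    (g : X → ℝ≥0∞) : ℝ≥0∞ :=
  if p = ∞ then essSup g μ else (∫⁻ x, g x ^ p.toReal ∂μ) ^ (1 / p.toReal)

namespace WienerAux

open Set


variable {n : ℕ}
local notation "E" => EuclideanSpace ℝ (Fin n)

noncomputable def avg (n : ℕ) (g : EuclideanSpace ℝ (Fin n) → ℝ≥0∞)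
    (u : EuclideanSpace ℝ (Fin n)) (r : ℝ) : ℝ≥0∞ :=
  (volume (closedBall (0 : EuclideanSpace ℝ (Fin n)) r))⁻¹ * ∫⁻ v in closedBall u r, g v

noncomputable def maxFn (n : ℕ) (s : ℝ) (g : EuclideanSpace ℝ (Fin n) → ℝ≥0∞)
    (u : EuclideanSpace ℝ (Fin n)) : ℝ≥0∞ :=
  ⨆ (r : ℝ) (_ : r ∈ Set.Ioc (0:ℝ) s), avg n g u r

lemma avg_le_iff {g : E → ℝ≥0∞} {u : E} {r : ℝ} : True := trivial

lemma hNontriv (hn : n ≠ 0) : Nontrivial E := by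
  have : NeZero n := ⟨hn⟩
  infer_instance

lemma avg_eq_withDensity (g : E → ℝ≥0∞) (u : E) (r : ℝ) :
    avg n g u r = (volume (closedBall (0 : E) r))⁻¹ *
      (volume.withDensity g (closedBall u r)) := by
  rw [avg, withDensity_apply _ measurableSet_closedBall]

lemma avg_le_ratSup (hn : n ≠ 0) (g : E → ℝ≥0∞) (u : E) {r : ℝ} (hr : 0 < r) :
    avg n g u r ≤ ⨆ (q : ℚ) (_ : 0 < (q:ℝ) ∧ (q:ℝ) < r), avg n g u q := by
  have := hNontriv (n := n) hn
  set ν := volume.withDensity g with hν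
  have hsph : ν (sphere u r) = 0 := by
    rw [hν, withDensity_apply _ isClosed_sphere.measurableSet,
      setLIntegral_measure_zero _ _ (Measure.addHaar_sphere volume u r)]
  have hcb : ν (closedBall u r) = ν (ball u r) := by
    apply le_antisymm _ (measure_mono ball_subset_closedBall)
    calc ν (closedBall u r) ≤ ν (ball u r ∪ sphere u r) := by
          apply measure_mono
          intro v hv
          rcases lt_or_eq_of_le (mem_closedBall.1 hv) with h | h
          · exact Or.inl h
          · exact Or.inr h
      _ ≤ ν (ball u r) + ν (sphere u r) := measure_union_le _ _
      _ = ν (ball u r) := by rw [hsph, add_zero]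
  have hball : ball u r = ⋃ q : {q : ℚ // 0 < (q:ℝ) ∧ (q:ℝ) < r}, closedBall u (q:ℝ) := by
    ext v
    simp only [mem_ball, mem_iUnion, mem_closedBall]
    constructor
    · intro hv
      obtain ⟨q, hq1, hq2⟩ := exists_rat_btwn (max_lt hv hr : max (dist v u) 0 < r)
      exact ⟨⟨q, by simpa using (lt_of_le_of_lt (le_max_right _ _) hq1), hq2⟩,
        le_of_lt (lt_of_le_of_lt (le_max_left _ _) hq1)⟩
    · rintro ⟨q, hq⟩
      exact lt_of_le_of_lt hq q.2.2
  have hdir : Directed (· ⊆ ·) fun q : {q : ℚ // 0 < (q:ℝ) ∧ (q:ℝ) < r} =>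
      closedBall u (q:ℝ) := by
    intro a b
    rcases le_total (a:ℚ) (b:ℚ) with h | h
    · exact ⟨b, closedBall_subset_closedBall (by exact_mod_cast h), subset_rfl⟩
    · exact ⟨a, subset_rfl, closedBall_subset_closedBall (by exact_mod_cast h)⟩
  have hsup : ν (ball u r) = ⨆ q : {q : ℚ // 0 < (q:ℝ) ∧ (q:ℝ) < r}, ν (closedBall u (q:ℝ)) := by
    rw [hball, hdir.measure_iUnion]
  rw [avg_eq_withDensity, hcb, hsup, ENNReal.mul_iSup]
  apply iSup_le
  rintro ⟨q, hq⟩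
  have h1 : (volume (closedBall (0:E) r))⁻¹ ≤ (volume (closedBall (0:E) (q:ℝ)))⁻¹ :=
    ENNReal.inv_le_inv.2 (measure_mono (closedBall_subset_closedBall hq.2.le))
  calc (volume (closedBall (0:E) r))⁻¹ * ν (closedBall u (q:ℝ))
      ≤ (volume (closedBall (0:E) (q:ℝ)))⁻¹ * ν (closedBall u (q:ℝ)) := by gcongr
    _ = avg n g u q := (avg_eq_withDensity g u q).symm
    _ ≤ ⨆ (q' : ℚ) (_ : 0 < (q':ℝ) ∧ (q':ℝ) < r), avg n g u q' := by
        apply le_iSup₂ (f := fun (q' : ℚ) (_ : 0 < (q':ℝ) ∧ (q':ℝ) < r) => avg n g u q') q hq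

lemma maxFn_eq_ratSup (hn : n ≠ 0) (s : ℝ) (g : E → ℝ≥0∞) (u : E) :
    maxFn n s g u = ⨆ (q : ℚ) (_ : (q:ℝ) ∈ Set.Ioc (0:ℝ) s), avg n g u q := by
  apply le_antisymm
  · apply iSup₂_le
    intro r hr
    refine le_trans (avg_le_ratSup hn g u hr.1) (iSup₂_le ?_)
    intro q hq
    exact le_iSup₂ (f := fun (q' : ℚ) (_ : (q':ℝ) ∈ Set.Ioc (0:ℝ) s) => avg n g u q') q
      ⟨hq.1, le_of_lt (lt_of_lt_of_le hq.2 hr.2)⟩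
  · exact iSup₂_le fun q hq => le_iSup₂ (f := fun (r : ℝ) (_ : r ∈ Set.Ioc (0:ℝ) s) =>
      avg n g u r) (q:ℝ) hq

lemma measurable_setLIntegral_ball {α : Type*} [MeasurableSpace α] {F : α → E → ℝ≥0∞}
    (hF : Measurable fun p : α × EuclideanSpace ℝ (Fin n) => F p.1 p.2)
    {c : α → E} (hc : Measurable c) (q : ℝ) :
    Measurable fun a => ∫⁻ v in closedBall (c a) q, F a v := by
  have key : ∀ a, ∫⁻ v in closedBall (c a) q, F a v
      = ∫⁻ v, ({p : α × EuclideanSpace ℝ (Fin n) | dist p.2 (c p.1) ≤ q}.indicator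
          (fun p => F p.1 p.2)) (a, v) := by
    intro a
    rw [← lintegral_indicator measurableSet_closedBall]
    refine lintegral_congr fun v => ?_
    simp [Set.indicator, mem_closedBall]
  simp only [key]
  apply Measurable.lintegral_prod_right
  apply hF.indicator
  exact measurableSet_le (measurable_dist.comp (measurable_snd.prodMk (hc.comp measurable_fst)))
    measurable_const

lemma measurable_maxFn (hn : n ≠ 0) (s : ℝ) {g : E → ℝ≥0∞} (hg : Measurable g) :
    Measurable (maxFn n s g) := by
  have : maxFn n s g = fun u => ⨆ (q : ℚ) (_ : (q:ℝ) ∈ Set.Ioc (0:ℝ) s), avg n g u q := by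
    ext u; exact maxFn_eq_ratSup hn s g u
  rw [this]
  apply Measurable.iSup
  intro q
  apply Measurable.iSup
  intro _
  apply Measurable.const_mul
  exact measurable_setLIntegral_ball (hg.comp measurable_snd) measurable_id _


lemma volB_translate (r : ℝ) (x : E) :
    volume (closedBall x r) = volume (closedBall (0 : E) r) := by
  rcases le_or_gt 0 r with hr | hr
  · rw [Measure.addHaar_closedBall _ _ hr, Measure.addHaar_closedBall _ _ hr]
  · simp [closedBall_eq_empty.2 hr]

lemma volB_smul {r : ℝ} (hr : 0 ≤ r) (c : ℝ) (hc : 0 ≤ c) (x : E) :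
    volume (closedBall x (c * r)) =
      ENNReal.ofReal (c ^ n) * volume (closedBall (0:E) r) := by
  rw [Measure.addHaar_closedBall _ _ (mul_nonneg hc hr), Measure.addHaar_closedBall _ _ hr,
    finrank_euclideanSpace_fin, mul_pow, ENNReal.ofReal_mul (by positivity), mul_assoc]

lemma avg_eq_withDensity' (g : E → ℝ≥0∞) (u : E) (r : ℝ) :
    avg n g u r = (volume (closedBall (0 : E) r))⁻¹ *
      (volume.withDensity g (closedBall u r)) := by
  rw [avg, withDensity_apply _ measurableSet_closedBall]


/-- Weak type (1,1) bound for the truncated centered maximal function. -/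
lemma weak_type (s : ℝ) (g : E → ℝ≥0∞) (τ : ℝ≥0∞) :
    τ * volume {u : E | τ < maxFn n s g u} ≤ (4:ℝ≥0∞)^n * ∫⁻ v, g v := by
  classical
  set ν := volume.withDensity g with hν
  set T := {u : E | τ < maxFn n s g u} with hT
  have hex : ∀ u ∈ T, ∃ r : ℝ, r ∈ Set.Ioc (0:ℝ) s ∧ τ < avg n g u r := by
    intro u hu
    have := hu
    rw [hT, mem_setOf_eq, maxFn, lt_iSup_iff] at this
    obtain ⟨r, hr⟩ := this
    rw [lt_iSup_iff] at hr
    obtain ⟨hrs, hlt⟩ := hr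
    exact ⟨r, hrs, hlt⟩
  set ρ : E → ℝ := fun u => if h : u ∈ T then (hex u h).choose else 0 with hρ
  have hρ1 : ∀ u ∈ T, ρ u ∈ Set.Ioc (0:ℝ) s := by
    intro u hu; rw [hρ]; simp only [dif_pos hu]; exact (hex u hu).choose_spec.1
  have hρ2 : ∀ u ∈ T, τ * volume (closedBall u (ρ u)) ≤ ν (closedBall u (ρ u)) := by
    intro u hu
    have hlt : τ < avg n g u (ρ u) := by
      rw [hρ]; simp only [dif_pos hu]; exact (hex u hu).choose_spec.2
    rw [avg_eq_withDensity'] at hlt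
    have hb0 : volume (closedBall (0:E) (ρ u)) ≠ 0 :=
      (measure_closedBall_pos _ _ (hρ1 u hu).1).ne'
    have hbt : volume (closedBall (0:E) (ρ u)) ≠ ∞ := measure_closedBall_lt_top.ne
    rw [← ENNReal.div_eq_inv_mul, ENNReal.lt_div_iff_mul_lt (Or.inl hb0) (Or.inl hbt)] at hlt
    rw [volB_translate]
    exact le_of_lt hlt
  obtain ⟨w, hwT, hwdisj, hwcover⟩ :=
    Vitali.exists_disjoint_subfamily_covering_enlargement_closedBall T id ρ s
      (fun a ha => (hρ1 a ha).2) 4 (by norm_num)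
  have hwc : w.Countable := by
    apply hwdisj.countable_of_nonempty_interior
    intro b hb
    rw [interior_closedBall _ (hρ1 b (hwT hb)).1.ne']
    exact ⟨b, mem_ball_self (hρ1 b (hwT hb)).1⟩
  have hcover : T ⊆ ⋃ b ∈ w, closedBall b (4 * ρ b) := by
    intro a ha
    obtain ⟨b, hb, hsub⟩ := hwcover a ha
    exact mem_biUnion hb (hsub (mem_closedBall_self (hρ1 a ha).1.le))
  have h4 : ∀ b ∈ w, volume (closedBall (b:E) (4 * ρ b)) =
      (4:ℝ≥0∞)^n * volume (closedBall b (ρ b)) := by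
    intro b hb
    rw [volB_smul (hρ1 b (hwT hb)).1.le 4 (by norm_num), volB_translate (ρ b) b]
    congr 1
    rw [show ((4:ℝ)^n) = ((4:ℝ≥0):ℝ)^n by norm_num, ← NNReal.coe_pow,
      ENNReal.ofReal_coe_nnreal]
    norm_num
  have : Countable w := hwc.to_subtype
  calc τ * volume T ≤ τ * ∑' b : w, volume (closedBall (b:E) (4 * ρ b)) := by
        gcongr
        exact le_trans (measure_mono hcover) (measure_biUnion_le volume hwc _)
    _ = ∑' b : w, τ * ((4:ℝ≥0∞)^n * volume (closedBall (b:E) (ρ b))) := by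
        rw [ENNReal.tsum_mul_left]
        congr 1
        exact tsum_congr fun b => by rw [h4 b b.2]
    _ = (4:ℝ≥0∞)^n * ∑' b : w, τ * volume (closedBall (b:E) (ρ b)) := by
        rw [← ENNReal.tsum_mul_left]
        exact tsum_congr fun b => by ring
    _ ≤ (4:ℝ≥0∞)^n * ∑' b : w, ν (closedBall (b:E) (ρ b)) := by
        gcongr with b
        exact hρ2 b (hwT b.2)
    _ = (4:ℝ≥0∞)^n * ν (⋃ b ∈ w, closedBall (b:E) (ρ b)) := by
        congr 1
        exact (measure_biUnion hwc hwdisj (fun b _ => measurableSet_closedBall)).symm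
    _ ≤ (4:ℝ≥0∞)^n * ν univ := by
        exact mul_le_mul_right (measure_mono (subset_univ _)) _
    _ = (4:ℝ≥0∞)^n * ∫⁻ v, g v := by rw [hν, withDensity_apply _ MeasurableSet.univ,
        Measure.restrict_univ]




lemma lintegral_rpow_Ioo {q : ℝ} (hq : 0 < q) {b : ℝ} (hb : 0 ≤ b) :
    ∫⁻ t in Ioo (0:ℝ) b, ENNReal.ofReal (t^(q-1)) = ENNReal.ofReal (b^q / q) := by
  have hint : IntervalIntegrable (fun t : ℝ => t ^ (q-1)) volume 0 b :=
    intervalIntegral.intervalIntegrable_rpow' (by linarith)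
  have hIoc : IntegrableOn (fun t : ℝ => t ^ (q-1)) (Ioc 0 b) volume := hint.1
  have hIoo : IntegrableOn (fun t : ℝ => t ^ (q-1)) (Ioo 0 b) volume :=
    hIoc.mono_set Ioo_subset_Ioc_self
  rw [← ofReal_integral_eq_lintegral_ofReal hIoo]
  · congr 1
    rw [← integral_Ioc_eq_integral_Ioo, ← intervalIntegral.integral_of_le hb,
      integral_rpow (Or.inl (by linarith))]
    rw [sub_add_cancel, Real.zero_rpow hq.ne', sub_zero]
  · filter_upwards [self_mem_ae_restrict measurableSet_Ioo] with t ht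
    exact Real.rpow_nonneg ht.1.le _

lemma lintegral_rpow_layer {q : ℝ} (hq : 0 < q) (c : ℝ≥0∞) :
    ∫⁻ t in Ioi (0:ℝ),
        {t : ℝ | ENNReal.ofReal t < c}.indicator (fun t => ENNReal.ofReal (t^(q-1))) t
      = c ^ q / ENNReal.ofReal q := by
  have hmS : MeasurableSet {t : ℝ | ENNReal.ofReal t < c} :=
    measurableSet_lt (ENNReal.measurable_ofReal) measurable_const
  rw [lintegral_indicator hmS, Measure.restrict_restrict hmS]
  rcases eq_or_ne c ∞ with hc | hc
  · have hS : {t : ℝ | ENNReal.ofReal t < c} ∩ Ioi 0 = Ioi 0 := by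
      refine inter_eq_right.2 fun t _ => ?_
      simp [hc, ENNReal.ofReal_lt_top]
    rw [hS, hc, ENNReal.top_rpow_of_pos hq, ENNReal.top_div_of_ne_top (by simp)]
    apply ENNReal.eq_top_of_forall_nnreal_le
    intro r
    set b : ℝ := (q * r) ^ (1/q : ℝ) with hbdef
    have hb : 0 ≤ b := Real.rpow_nonneg (by positivity) _
    have hbq : b ^ q = q * r := by
      rw [hbdef, ← Real.rpow_mul (by positivity), one_div, inv_mul_cancel₀ hq.ne',
        Real.rpow_one]
    calc (r : ℝ≥0∞) = ENNReal.ofReal (b ^ q / q) := by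
          rw [hbq, mul_div_cancel_left₀ _ hq.ne', ENNReal.ofReal_coe_nnreal]
      _ = ∫⁻ t in Ioo (0:ℝ) b, ENNReal.ofReal (t^(q-1)) := (lintegral_rpow_Ioo hq hb).symm
      _ ≤ ∫⁻ t in Ioi (0:ℝ), ENNReal.ofReal (t^(q-1)) :=
          lintegral_mono_set Ioo_subset_Ioi_self
  · rcases eq_or_ne c 0 with hc0 | hc0
    · have hS : {t : ℝ | ENNReal.ofReal t < c} ∩ Ioi 0 = ∅ := by
        ext t; simp [hc0]
      rw [hS, hc0, ENNReal.zero_rpow_of_pos hq, ENNReal.zero_div]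
      simp
    · have hS : {t : ℝ | ENNReal.ofReal t < c} ∩ Ioi 0 = Ioo 0 c.toReal := by
        ext t
        simp only [mem_inter_iff, mem_setOf_eq, mem_Ioi, mem_Ioo]
        constructor
        · rintro ⟨h1, h2⟩
          exact ⟨h2, (ENNReal.ofReal_lt_iff_lt_toReal h2.le hc).1 h1⟩
        · rintro ⟨h1, h2⟩
          exact ⟨(ENNReal.ofReal_lt_iff_lt_toReal h1.le hc).2 h2, h1⟩
      rw [hS, lintegral_rpow_Ioo hq ENNReal.toReal_nonneg,
        ENNReal.ofReal_div_of_pos hq]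
      congr 1
      rw [← ENNReal.ofReal_rpow_of_pos (ENNReal.toReal_pos hc0 hc),
        ENNReal.ofReal_toReal hc]

/-- Layer cake formula for `ℝ≥0∞`-valued functions. -/
lemma layercake {α : Type*} [MeasurableSpace α] (μ : Measure α) [SigmaFinite μ]
    {h : α → ℝ≥0∞} (hh : Measurable h) {q : ℝ} (hq : 0 < q) :
    ∫⁻ x, (h x) ^ q ∂μ = ENNReal.ofReal q *
      ∫⁻ t in Ioi (0:ℝ), ENNReal.ofReal (t^(q-1)) * μ {x | ENNReal.ofReal t < h x} := by
  have hq0 : ENNReal.ofReal q ≠ 0 := by simp [hq]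
  have hqt : ENNReal.ofReal q ≠ ∞ := ENNReal.ofReal_ne_top
  have key : ∀ x, (h x) ^ q = ENNReal.ofReal q *
      ∫⁻ t in Ioi (0:ℝ),
        {t : ℝ | ENNReal.ofReal t < h x}.indicator (fun t => ENNReal.ofReal (t^(q-1))) t := by
    intro x
    rw [lintegral_rpow_layer hq, ENNReal.mul_div_cancel hq0 hqt]
  calc ∫⁻ x, (h x) ^ q ∂μ
      = ∫⁻ x, (ENNReal.ofReal q * ∫⁻ t in Ioi (0:ℝ),
          {t : ℝ | ENNReal.ofReal t < h x}.indicator (fun t => ENNReal.ofReal (t^(q-1))) t) ∂μ := by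
        exact lintegral_congr key
    _ = ENNReal.ofReal q * ∫⁻ x, (∫⁻ t in Ioi (0:ℝ),
          {t : ℝ | ENNReal.ofReal t < h x}.indicator (fun t => ENNReal.ofReal (t^(q-1))) t) ∂μ :=
        lintegral_const_mul' _ _ hqt
    _ = ENNReal.ofReal q * ∫⁻ t in Ioi (0:ℝ),
          ∫⁻ x, {t : ℝ | ENNReal.ofReal t < h x}.indicator
            (fun t => ENNReal.ofReal (t^(q-1))) t ∂μ := by
        congr 1
        apply lintegral_lintegral_swap
        apply Measurable.aemeasurable
        have : (Function.uncurry fun (x : α) (t : ℝ) =>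
            {t : ℝ | ENNReal.ofReal t < h x}.indicator (fun t => ENNReal.ofReal (t^(q-1))) t)
            = {p : α × ℝ | ENNReal.ofReal p.2 < h p.1}.indicator
                (fun p => ENNReal.ofReal (p.2^(q-1))) := by
          ext p
          simp [Function.uncurry, Set.indicator]
        rw [this]
        apply Measurable.indicator
        · exact (ENNReal.measurable_ofReal.comp ((measurable_snd.pow_const _))).comp measurable_id
        · exact measurableSet_lt (ENNReal.measurable_ofReal.comp measurable_snd)
            (hh.comp measurable_fst)
    _ = ENNReal.ofReal q * ∫⁻ t in Ioi (0:ℝ),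
          ENNReal.ofReal (t^(q-1)) * μ {x | ENNReal.ofReal t < h x} := by
        congr 1
        apply lintegral_congr
        intro t
        have : ∀ x : α, {t' : ℝ | ENNReal.ofReal t' < h x}.indicator
            (fun t' => ENNReal.ofReal (t'^(q-1))) t
            = {x' : α | ENNReal.ofReal t < h x'}.indicator
                (fun _ => ENNReal.ofReal (t^(q-1))) x := by
          intro x; simp [Set.indicator, mem_setOf_eq]
        rw [lintegral_congr this, lintegral_indicator_const
          (measurableSet_lt measurable_const hh)]


lemma inner_bound {q : ℝ} (hq : 1 < q) (γ : ℝ≥0∞) :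
    ∫⁻ t in Ioi (0:ℝ), ENNReal.ofReal (t^(q-2)) * (if ENNReal.ofReal (t/2) < γ then γ else 0)
      ≤ ((2:ℝ≥0∞)^(q-1) / ENNReal.ofReal (q-1)) * γ ^ q := by
  have hq1 : 0 < q - 1 := by linarith
  have hK0 : ((2:ℝ≥0∞)^(q-1) / ENNReal.ofReal (q-1)) ≠ 0 := by
    apply ENNReal.div_ne_zero.2
    exact ⟨(ENNReal.rpow_pos (by norm_num) (by norm_num)).ne', ENNReal.ofReal_ne_top⟩
  rcases eq_or_ne γ ∞ with hγ | hγ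
  · rw [hγ, ENNReal.top_rpow_of_pos (by linarith), ENNReal.mul_top hK0]
    exact le_top
  · refine le_of_eq ?_
    have key : ∀ t : ℝ, ENNReal.ofReal (t^(q-2)) * (if ENNReal.ofReal (t/2) < γ then γ else 0)
        = γ * ({t : ℝ | ENNReal.ofReal t < 2 * γ}.indicator
            (fun t => ENNReal.ofReal (t^((q-1)-1))) t) := by
      intro t
      have hiff : ENNReal.ofReal (t/2) < γ ↔ ENNReal.ofReal t < 2 * γ := by
        rw [show ENNReal.ofReal t = 2 * ENNReal.ofReal (t/2) by
          rw [← ENNReal.ofReal_ofNat, ← ENNReal.ofReal_mul (by norm_num)]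
          congr 1
          ring]
        exact (ENNReal.mul_lt_mul_iff_right (by norm_num) (by norm_num)).symm
      by_cases h : ENNReal.ofReal (t/2) < γ
      · rw [if_pos h, Set.indicator_of_mem (by simpa [mem_setOf_eq] using hiff.1 h)]
        rw [show q - 1 - 1 = q - 2 by ring, mul_comm]
      · rw [if_neg h, Set.indicator_of_notMem (by simpa [mem_setOf_eq] using (hiff.not.1 h)),
          mul_zero, mul_zero]
    calc ∫⁻ t in Ioi (0:ℝ), ENNReal.ofReal (t^(q-2)) * (if ENNReal.ofReal (t/2) < γ then γ else 0)
        = ∫⁻ t in Ioi (0:ℝ), γ * ({t : ℝ | ENNReal.ofReal t < 2 * γ}.indicator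
            (fun t => ENNReal.ofReal (t^((q-1)-1))) t) := lintegral_congr key
      _ = γ * ∫⁻ t in Ioi (0:ℝ), {t : ℝ | ENNReal.ofReal t < 2 * γ}.indicator
            (fun t => ENNReal.ofReal (t^((q-1)-1))) t := lintegral_const_mul' _ _ hγ
      _ = γ * ((2 * γ) ^ (q-1) / ENNReal.ofReal (q-1)) := by
          rw [lintegral_rpow_layer hq1]
      _ = ((2:ℝ≥0∞)^(q-1) / ENNReal.ofReal (q-1)) * γ ^ q := by
          rw [ENNReal.mul_rpow_of_nonneg _ _ hq1.le]
          rw [ENNReal.div_eq_inv_mul, ENNReal.div_eq_inv_mul]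
          have hγq : γ ^ q = γ * γ ^ (q - 1) := by
            calc γ ^ q = γ ^ (1 + (q-1)) := by ring_nf
              _ = γ ^ (1:ℝ) * γ ^ (q-1) := ENNReal.rpow_add_of_nonneg 1 (q-1) zero_le_one hq1.le
              _ = γ * γ ^ (q-1) := by rw [ENNReal.rpow_one]
          rw [hγq]
          ring

/-- The Hardy–Littlewood strong-type constant. -/
noncomputable def Cst (n : ℕ) (q : ℝ) : ℝ≥0∞ :=
  ENNReal.ofReal q * (4:ℝ≥0∞)^n * 2 * ((2:ℝ≥0∞)^(q-1) / ENNReal.ofReal (q-1))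

lemma Cst_ne_zero {q : ℝ} (hq : 1 < q) : Cst n q ≠ 0 := by
  have h1 : ENNReal.ofReal q ≠ 0 := by simp [(by linarith : (0:ℝ) < q)]
  have h2 : ((2:ℝ≥0∞)^(q-1) / ENNReal.ofReal (q-1)) ≠ 0 :=
    ENNReal.div_ne_zero.2 ⟨(ENNReal.rpow_pos (by norm_num) (by norm_num)).ne',
      ENNReal.ofReal_ne_top⟩
  simp only [Cst, ne_eq, mul_eq_zero]
  push_neg
  refine ⟨⟨⟨h1, ?_⟩, ?_⟩, h2⟩ <;> positivity

lemma Kdiv_ne_top {q : ℝ} (hq : 1 < q) : ((2:ℝ≥0∞)^(q-1) / ENNReal.ofReal (q-1)) ≠ ∞ := by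
  rw [ENNReal.div_eq_inv_mul]
  apply ENNReal.mul_ne_top
  · rw [ne_eq, ENNReal.inv_eq_top]
    simp only [ne_eq, ENNReal.ofReal_eq_zero, not_le]
    linarith
  · exact ENNReal.rpow_ne_top_of_nonneg (by linarith) (by norm_num)

lemma Cst_ne_top {q : ℝ} (hq : 1 < q) : Cst n q ≠ ∞ := by
  have h2 := Kdiv_ne_top hq
  apply ENNReal.mul_ne_top
  apply ENNReal.mul_ne_top
  apply ENNReal.mul_ne_top
  · exact ENNReal.ofReal_ne_top
  · exact ENNReal.pow_ne_top (by norm_num)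
  · norm_num
  · exact h2

/-- Strong type `(q,q)` bound for the truncated centered maximal function, `q > 1`. -/
lemma strong_type (hn : n ≠ 0) (s : ℝ) {g : E → ℝ≥0∞} (hg : Measurable g)
    {q : ℝ} (hq : 1 < q) :
    ∫⁻ u, (maxFn n s g u) ^ q ≤ Cst n q * ∫⁻ v, (g v) ^ q := by
  have hq0 : (0:ℝ) < q := by linarith
  set K : ℝ≥0∞ := (2:ℝ≥0∞)^(q-1) / ENNReal.ofReal (q-1) with hK
  have hKtop : K ≠ ∞ := Kdiv_ne_top hq
  -- the key pointwise-in-t bound on the distribution function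
  have key : ∀ t : ℝ, 0 < t →
      ENNReal.ofReal (t^(q-1)) * volume {u : E | ENNReal.ofReal t < maxFn n s g u}
        ≤ (4:ℝ≥0∞)^n * 2 * (ENNReal.ofReal (t^(q-2)) *
            ∫⁻ v, ({v : E | ENNReal.ofReal (t/2) < g v}.indicator g) v) := by
    intro t ht
    set c : ℝ≥0∞ := ENNReal.ofReal (t/2) with hc
    have hc0 : c ≠ 0 := by simp [hc, (by linarith : (0:ℝ) < t/2)]
    have hct : c ≠ ∞ := ENNReal.ofReal_ne_top
    set g₁ : E → ℝ≥0∞ := {v : E | c < g v}.indicator g with hg₁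
    -- pointwise splitting bound
    have hsplit : ∀ u : E, maxFn n s g u ≤ maxFn n s g₁ u + c := by
      intro u
      apply iSup₂_le
      intro r hr
      have havg : avg n g u r ≤ avg n g₁ u r + c := by
        have hpt : ∀ v : E, g v ≤ g₁ v + c := by
          intro v
          by_cases h : c < g v
          · rw [hg₁, Set.indicator_of_mem (by exact h)]
            exact le_self_add
          · push_neg at h
            exact le_add_left h
        have hb0 : volume (closedBall (0:E) r) ≠ 0 :=
          (measure_closedBall_pos _ _ hr.1).ne'
        have hbt : volume (closedBall (0:E) r) ≠ ∞ := measure_closedBall_lt_top.ne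
        calc avg n g u r ≤ (volume (closedBall (0:E) r))⁻¹ *
              ∫⁻ v in closedBall u r, (g₁ v + c) := by
              apply mul_le_mul_right
              exact lintegral_mono hpt
          _ = (volume (closedBall (0:E) r))⁻¹ *
              ((∫⁻ v in closedBall u r, g₁ v) + c * volume (closedBall u r)) := by
              rw [lintegral_add_right _ measurable_const, setLIntegral_const]
          _ = avg n g₁ u r + (volume (closedBall (0:E) r))⁻¹ *
              (c * volume (closedBall (0:E) r)) := by
              rw [mul_add, volB_translate r u]
              rfl
          _ = avg n g₁ u r + c := by
              congr 1
              rw [mul_comm c, ← mul_assoc, ENNReal.inv_mul_cancel hb0 hbt, one_mul]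
      calc avg n g u r ≤ avg n g₁ u r + c := havg
        _ ≤ maxFn n s g₁ u + c := by
            gcongr
            exact le_iSup₂ (f := fun (r' : ℝ) (_ : r' ∈ Set.Ioc (0:ℝ) s) => avg n g₁ u r') r hr
    -- level set inclusion
    have hsub : {u : E | ENNReal.ofReal t < maxFn n s g u} ⊆ {u : E | c < maxFn n s g₁ u} := by
      intro u hu
      rw [mem_setOf_eq] at hu ⊢
      by_contra hco
      push_neg at hco
      have : maxFn n s g u ≤ c + c := le_trans (hsplit u) (by gcongr)
      have hcc : c + c = ENNReal.ofReal t := by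
        rw [hc, ← ENNReal.ofReal_add (by linarith) (by linarith)]
        congr 1
        ring
      rw [hcc] at this
      exact absurd (lt_of_lt_of_le hu this) (lt_irrefl _)
    -- weak type bound
    have hweak := weak_type (n := n) s g₁ c
    have hvol : volume {u : E | ENNReal.ofReal t < maxFn n s g u}
        ≤ c⁻¹ * ((4:ℝ≥0∞)^n * ∫⁻ v, g₁ v) := by
      calc volume {u : E | ENNReal.ofReal t < maxFn n s g u}
          ≤ volume {u : E | c < maxFn n s g₁ u} := measure_mono hsub
        _ = c⁻¹ * (c * volume {u : E | c < maxFn n s g₁ u}) := by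
            rw [← mul_assoc, ENNReal.inv_mul_cancel hc0 hct, one_mul]
        _ ≤ c⁻¹ * ((4:ℝ≥0∞)^n * ∫⁻ v, g₁ v) := by gcongr
    calc ENNReal.ofReal (t^(q-1)) * volume {u : E | ENNReal.ofReal t < maxFn n s g u}
        ≤ ENNReal.ofReal (t^(q-1)) * (c⁻¹ * ((4:ℝ≥0∞)^n * ∫⁻ v, g₁ v)) := by gcongr
      _ = (ENNReal.ofReal (t^(q-1)) * c⁻¹) * ((4:ℝ≥0∞)^n * ∫⁻ v, g₁ v) := by ring
      _ = (4:ℝ≥0∞)^n * 2 * (ENNReal.ofReal (t^(q-2)) * ∫⁻ v, g₁ v) := by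
          have hcinv : c⁻¹ = ENNReal.ofReal ((t/2)⁻¹) := by
            rw [hc, ENNReal.ofReal_inv_of_pos (by linarith)]
          have : ENNReal.ofReal (t^(q-1)) * c⁻¹ = 2 * ENNReal.ofReal (t^(q-2)) := by
            rw [hcinv, ← ENNReal.ofReal_mul (Real.rpow_nonneg ht.le _)]
            rw [show (2:ℝ≥0∞) = ENNReal.ofReal 2 by simp,
              ← ENNReal.ofReal_mul (by norm_num)]
            congr 1
            rw [show q - 1 = (q-2) + 1 by ring, Real.rpow_add ht, Real.rpow_one, inv_div]
            field_simp
          rw [this]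
          ring
  -- assemble via layer cake
  rcases eq_or_ne (∫⁻ v, (g v)^q) ∞ with htop | hfin
  · rw [htop, ENNReal.mul_top (Cst_ne_zero hq)]
    exact le_top
  calc ∫⁻ u, (maxFn n s g u) ^ q
      = ENNReal.ofReal q * ∫⁻ t in Ioi (0:ℝ), ENNReal.ofReal (t^(q-1)) *
          volume {u : E | ENNReal.ofReal t < maxFn n s g u} :=
        layercake volume (measurable_maxFn hn s hg) hq0
    _ ≤ ENNReal.ofReal q * ∫⁻ t in Ioi (0:ℝ), (4:ℝ≥0∞)^n * 2 * (ENNReal.ofReal (t^(q-2)) *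
          ∫⁻ v, ({v : E | ENNReal.ofReal (t/2) < g v}.indicator g) v) := by
        apply mul_le_mul_right
        apply lintegral_mono_ae
        filter_upwards [self_mem_ae_restrict measurableSet_Ioi] with t ht
        exact key t ht
    _ = ENNReal.ofReal q * ((4:ℝ≥0∞)^n * 2 * ∫⁻ t in Ioi (0:ℝ),
          ∫⁻ v, ENNReal.ofReal (t^(q-2)) *
            ({v : E | ENNReal.ofReal (t/2) < g v}.indicator g) v ∂volume) := by
        congr 1
        rw [lintegral_const_mul' _ _ (by
          exact ENNReal.mul_ne_top (ENNReal.pow_ne_top (by norm_num)) (by norm_num))]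
        congr 1
        apply lintegral_congr
        intro t
        rw [lintegral_const_mul' _ _ ENNReal.ofReal_ne_top]
    _ = ENNReal.ofReal q * ((4:ℝ≥0∞)^n * 2 * ∫⁻ v, ∫⁻ t in Ioi (0:ℝ),
          ENNReal.ofReal (t^(q-2)) *
            ({v : E | ENNReal.ofReal (t/2) < g v}.indicator g) v ∂volume) := by
        congr 2
        apply lintegral_lintegral_swap
        apply Measurable.aemeasurable
        have : (Function.uncurry fun (t : ℝ) (v : E) => ENNReal.ofReal (t^(q-2)) *
            ({v : E | ENNReal.ofReal (t/2) < g v}.indicator g) v)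
            = fun p : ℝ × E => ENNReal.ofReal (p.1^(q-2)) *
              ({p : ℝ × E | ENNReal.ofReal (p.1/2) < g p.2}.indicator (fun p => g p.2)) p := by
          ext p
          by_cases h : ENNReal.ofReal (p.1/2) < g p.2 <;>
            simp [Function.uncurry, Set.indicator, mem_setOf_eq, h]
        rw [this]
        apply Measurable.mul
        · exact ENNReal.measurable_ofReal.comp (measurable_fst.pow_const _)
        · apply Measurable.indicator (hg.comp measurable_snd)
          apply measurableSet_lt
          · exact ENNReal.measurable_ofReal.comp (measurable_fst.div_const _)
          · exact hg.comp measurable_snd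
    _ ≤ ENNReal.ofReal q * ((4:ℝ≥0∞)^n * 2 * ∫⁻ v, K * (g v) ^ q) := by
        apply mul_le_mul_right
        apply mul_le_mul_right
        apply lintegral_mono
        intro v
        have := inner_bound hq (g v)
        refine le_trans (le_of_eq ?_) this
        apply lintegral_congr
        intro t
        by_cases h : ENNReal.ofReal (t/2) < g v <;>
          simp [Set.indicator, mem_setOf_eq, h]
    _ = Cst n q * ∫⁻ v, (g v) ^ q := by
        rw [lintegral_const_mul' _ _ hKtop, Cst]
        ring



section Transfer

variable {X : Type} [MeasurableSpace X] {μ : Measure X} [SigmaFinite μ]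
  {π : EuclideanSpace ℝ (Fin n) → X → X} {f : X → ℝ≥0∞}

/-- Measurability in `x` of the truncated maximal ergodic function. -/
lemma measurable_ergMax
    (hπm : Measurable fun q : EuclideanSpace ℝ (Fin n) × X => π q.1 q.2)
    (hf : Measurable f) (hn : n ≠ 0) (s : ℝ) :
    Measurable fun x => maxFn n s (fun v => f (π v x)) 0 := by
  have key : (fun x => maxFn n s (fun v => f (π v x)) 0)
      = fun x => ⨆ (q : ℚ) (_ : (q:ℝ) ∈ Set.Ioc (0:ℝ) s), avg n (fun v => f (π v x)) 0 q := by
    ext x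
    exact maxFn_eq_ratSup hn s _ 0
  rw [key]
  apply Measurable.iSup
  intro q
  apply Measurable.iSup
  intro _
  apply Measurable.const_mul
  exact measurable_setLIntegral_ball
    (hf.comp (hπm.comp (measurable_snd.prodMk measurable_fst))) measurable_const _

lemma ergMax_translate (hπadd : ∀ u v x, π (u + v) x = π u (π v x))
    (s : ℝ) (u : E) (x : X) :
    maxFn n s (fun v => f (π v (π u x))) 0 = maxFn n s (fun v => f (π v x)) u := by
  unfold maxFn
  apply iSup_congr
  intro r
  apply iSup_congr
  intro hr
  have h1 : ∀ v : E, f (π v (π u x)) = f (π (v + u) x) := by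
    intro v
    rw [hπadd]
  unfold avg
  congr 1
  calc ∫⁻ v in closedBall (0:E) r, f (π v (π u x))
      = ∫⁻ v in closedBall (0:E) r, f (π (v + u) x) := by
        exact setLIntegral_congr_fun measurableSet_closedBall
          (fun v _ => h1 v)
    _ = ∫⁻ v in (fun v : E => v + u) ⁻¹' (closedBall u r), f (π (v + u) x) := by
        have hpre : (fun v : E => v + u) ⁻¹' (closedBall u r) = closedBall (0:E) r := by
          ext v
          simp only [mem_preimage, mem_closedBall]
          have hd := dist_add_right v 0 u
          rw [zero_add] at hd
          rw [hd]
        rw [hpre]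
    _ = ∫⁻ w in closedBall u r, f (π w x) := by
        exact (measurePreserving_add_right volume u).setLIntegral_comp_preimage_emb
          (MeasurableEquiv.addRight u).measurableEmbedding (fun w => f (π w x)) _

lemma ergMax_localize {s : ℝ} (hs : 0 < s) (x : X) {u : E} (hu : u ∈ closedBall (0:E) s) :
    maxFn n s (fun v => f (π v x)) u
      = maxFn n s ((closedBall (0:E) (2*s)).indicator (fun v => f (π v x))) u := by
  unfold maxFn
  apply iSup_congr
  intro r
  apply iSup_congr
  intro hr
  unfold avg
  congr 1
  refine (setLIntegral_congr_fun measurableSet_closedBall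
    (fun w hw => ?_)).symm
  apply Set.indicator_of_mem
  have : dist w (0:E) ≤ dist w u + dist u 0 := dist_triangle _ _ _
  rw [mem_closedBall] at hw hu ⊢
  calc dist w (0:E) ≤ dist w u + dist u 0 := this
    _ ≤ r + s := add_le_add hw hu
    _ ≤ 2 * s := by linarith [hr.2]

/-- Transference: the truncated maximal ergodic function satisfies a strong-type bound with
constant independent of the truncation. -/
lemma transfer
    (hπm : Measurable fun q : EuclideanSpace ℝ (Fin n) × X => π q.1 q.2)
    (hf : Measurable f)
    (hn : n ≠ 0) (hπadd : ∀ u v x, π (u + v) x = π u (π v x))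
    (hπmp : ∀ v, MeasurePreserving (π v) μ μ)
    {s : ℝ} (hs : 0 < s) {q : ℝ} (hq : 1 < q) :
    ∫⁻ x, (maxFn n s (fun v => f (π v x)) 0) ^ q ∂μ
      ≤ (2:ℝ≥0∞)^n * Cst n q * ∫⁻ x, (f x) ^ q ∂μ := by
  have hq0 : (0:ℝ) < q := by linarith
  set hsx : X → ℝ≥0∞ := fun x => maxFn n s (fun v => f (π v x)) 0 with hhsx
  have hmeas : Measurable hsx := measurable_ergMax hπm hf hn s
  set V : ℝ≥0∞ := volume (closedBall (0:E) s) with hV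
  have hV0 : V ≠ 0 := (measure_closedBall_pos _ _ hs).ne'
  have hVt : V ≠ ∞ := measure_closedBall_lt_top.ne
  -- measure preservation step
  have hinv : ∀ u : E, ∫⁻ x, (hsx (π u x)) ^ q ∂μ = ∫⁻ x, (hsx x) ^ q ∂μ := by
    intro u
    exact (hπmp u).lintegral_comp (hmeas.pow_const q)
  have step1 : ∫⁻ x, (hsx x) ^ q ∂μ
      = V⁻¹ * ∫⁻ u in closedBall (0:E) s, (∫⁻ x, (hsx (π u x)) ^ q ∂μ) := by
    have : ∫⁻ u in closedBall (0:E) s, (∫⁻ x, (hsx (π u x)) ^ q ∂μ)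
        = ∫⁻ u in closedBall (0:E) s, (∫⁻ x, (hsx x) ^ q ∂μ) := by
      exact setLIntegral_congr_fun measurableSet_closedBall
        (fun u _ => hinv u)
    rw [this, setLIntegral_const, ← hV,
      mul_comm (∫⁻ x, (hsx x) ^ q ∂μ) V, ← mul_assoc, ENNReal.inv_mul_cancel hV0 hVt, one_mul]
  -- swap the integrals
  have hswap : ∫⁻ u in closedBall (0:E) s, (∫⁻ x, (hsx (π u x)) ^ q ∂μ)
      = ∫⁻ x, (∫⁻ u in closedBall (0:E) s, (hsx (π u x)) ^ q) ∂μ := by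
    apply lintegral_lintegral_swap
    apply Measurable.aemeasurable
    exact ((hmeas.comp hπm).pow_const q).comp
      (measurable_fst.prodMk measurable_snd)
  -- pointwise bound of the inner integral via the HL strong type inequality
  have hptwise : ∀ x : X, (∫⁻ u in closedBall (0:E) s, (hsx (π u x)) ^ q)
      ≤ Cst n q * ∫⁻ v in closedBall (0:E) (2*s), (f (π v x)) ^ q := by
    intro x
    set gt : E → ℝ≥0∞ := (closedBall (0:E) (2*s)).indicator (fun v => f (π v x)) with hgt
    have hgtm : Measurable gt := by
      apply Measurable.indicator _ measurableSet_closedBall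
      exact hf.comp (hπm.comp (measurable_id.prodMk measurable_const))
    calc ∫⁻ u in closedBall (0:E) s, (hsx (π u x)) ^ q
        = ∫⁻ u in closedBall (0:E) s, (maxFn n s gt u) ^ q := by
          apply setLIntegral_congr_fun measurableSet_closedBall
          intro u hu
          rw [hhsx]
          simp only
          rw [ergMax_translate hπadd s u x, ergMax_localize hs x hu]
      _ ≤ ∫⁻ u, (maxFn n s gt u) ^ q := setLIntegral_le_lintegral _ _
      _ ≤ Cst n q * ∫⁻ v, (gt v) ^ q := strong_type hn s hgtm hq
      _ = Cst n q * ∫⁻ v in closedBall (0:E) (2*s), (f (π v x)) ^ q := by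
          congr 1
          have : ∀ v : E, (gt v) ^ q
              = (closedBall (0:E) (2*s)).indicator (fun v => (f (π v x)) ^ q) v := by
            intro v
            rw [hgt]
            by_cases h : v ∈ closedBall (0:E) (2*s)
            · rw [Set.indicator_of_mem h, Set.indicator_of_mem h]
            · rw [Set.indicator_of_notMem h, Set.indicator_of_notMem h,
                ENNReal.zero_rpow_of_pos hq0]
          rw [lintegral_congr this, lintegral_indicator measurableSet_closedBall]
  -- second swap and measure preservation
  have hswap2 : ∫⁻ x, (∫⁻ v in closedBall (0:E) (2*s), (f (π v x)) ^ q) ∂μ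
      = ∫⁻ v in closedBall (0:E) (2*s), (∫⁻ x, (f (π v x)) ^ q ∂μ) := by
    symm
    apply lintegral_lintegral_swap
    apply Measurable.aemeasurable
    exact (hf.comp hπm).pow_const q
  have hfis : ∀ v : E, ∫⁻ x, (f (π v x)) ^ q ∂μ = ∫⁻ x, (f x) ^ q ∂μ := fun v =>
    (hπmp v).lintegral_comp (hf.pow_const q)
  calc ∫⁻ x, (hsx x) ^ q ∂μ
      = V⁻¹ * ∫⁻ u in closedBall (0:E) s, (∫⁻ x, (hsx (π u x)) ^ q ∂μ) := step1
    _ = V⁻¹ * ∫⁻ x, (∫⁻ u in closedBall (0:E) s, (hsx (π u x)) ^ q) ∂μ := by rw [hswap]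
    _ ≤ V⁻¹ * ∫⁻ x, (Cst n q * ∫⁻ v in closedBall (0:E) (2*s), (f (π v x)) ^ q) ∂μ := by
        apply mul_le_mul_right
        exact lintegral_mono fun x => hptwise x
    _ = V⁻¹ * (Cst n q * ∫⁻ x, (∫⁻ v in closedBall (0:E) (2*s), (f (π v x)) ^ q) ∂μ) := by
        rw [lintegral_const_mul' _ _ (Cst_ne_top hq)]
    _ = V⁻¹ * (Cst n q * ∫⁻ v in closedBall (0:E) (2*s), (∫⁻ x, (f x) ^ q ∂μ)) := by
        rw [hswap2, setLIntegral_congr_fun measurableSet_closedBall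
          (fun v _ => hfis v)]
    _ = (2:ℝ≥0∞)^n * Cst n q * ∫⁻ x, (f x) ^ q ∂μ := by
        rw [setLIntegral_const]
        have h2s : volume (closedBall (0:E) (2*s)) = (2:ℝ≥0∞)^n * V := by
          rw [hV, volB_smul hs.le 2 (by norm_num)]
          congr 1
          rw [show ((2:ℝ)^n) = ((2:ℝ≥0):ℝ)^n by norm_num, ← NNReal.coe_pow,
            ENNReal.ofReal_coe_nnreal]
          norm_num
        rw [h2s]
        calc V⁻¹ * (Cst n q * ((∫⁻ x, (f x) ^ q ∂μ) * ((2:ℝ≥0∞)^n * V)))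
            = ((2:ℝ≥0∞)^n * Cst n q * ∫⁻ x, (f x) ^ q ∂μ) * (V⁻¹ * V) := by ring
          _ = (2:ℝ≥0∞)^n * Cst n q * ∫⁻ x, (f x) ^ q ∂μ := by
              rw [ENNReal.inv_mul_cancel hV0 hVt, mul_one]


/-- `p = ∞` case: the maximal ergodic function is a.e. bounded by the essential sup of `f`. -/
lemma pinf
    (hπm : Measurable fun q : EuclideanSpace ℝ (Fin n) × X => π q.1 q.2)
    (hf : Measurable f) (hπmp : ∀ v, MeasurePreserving (π v) μ μ) :
    essSup (fun x => ⨆ (r : ℝ) (_ : 0 < r),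
        (volume (closedBall (0 : E) r))⁻¹ * ∫⁻ v in closedBall (0 : E) r, f (π v x)) μ
      ≤ essSup f μ := by
  set c := essSup f μ with hc
  have hslice : ∀ v : E, μ {x | c < f (π v x)} = 0 := by
    intro v
    have h1 : {x | c < f (π v x)} = (π v) ⁻¹' {y | c < f y} := rfl
    rw [h1, (hπmp v).measure_preimage (measurableSet_lt measurable_const hf).nullMeasurableSet]
    have h2 := ae_iff.1 (ae_le_essSup (f := f) (μ := μ))
    simpa [not_le] using h2
  set S : Set (X × E) := {p : X × E | c < f (π p.2 p.1)} with hS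
  have hSm : MeasurableSet S :=
    measurableSet_lt measurable_const (hf.comp (hπm.comp (measurable_snd.prodMk measurable_fst)))
  set W : X → ℝ≥0∞ := fun x => ∫⁻ v, S.indicator (fun _ => (1:ℝ≥0∞)) (x, v) with hW
  have hrw : ∀ x, W x = volume {v : E | c < f (π v x)} := by
    intro x
    have : ∀ v : E, S.indicator (fun _ => (1:ℝ≥0∞)) (x, v)
        = {v : E | c < f (π v x)}.indicator (fun _ => (1:ℝ≥0∞)) v := by
      intro v
      by_cases h : c < f (π v x) <;> simp [Set.indicator, hS, mem_setOf_eq, h]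
    rw [hW]
    simp only
    have hset : MeasurableSet {v : E | c < f (π v x)} :=
      measurableSet_lt measurable_const
        ((hf.comp (hπm.comp (measurable_id.prodMk measurable_const))) :
          Measurable fun v : E => f (π v x))
    rw [lintegral_congr this, lintegral_indicator_const hset, one_mul]
  have hWm : Measurable W := by
    apply Measurable.lintegral_prod_right
    exact measurable_const.indicator hSm
  have hzero : ∫⁻ x, W x ∂μ = 0 := by
    have hswap : ∫⁻ x, W x ∂μ
        = ∫⁻ v, (∫⁻ x, S.indicator (fun _ => (1:ℝ≥0∞)) (x, v) ∂μ) := by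
      apply lintegral_lintegral_swap
      apply Measurable.aemeasurable
      have : (Function.uncurry fun (x : X) (v : E) => S.indicator (fun _ => (1:ℝ≥0∞)) (x, v))
          = S.indicator (fun _ => (1:ℝ≥0∞)) := by
        ext p
        rfl
      rw [this]
      exact measurable_const.indicator hSm
    rw [hswap]
    have hinner : ∀ v : E, (∫⁻ x, S.indicator (fun _ => (1:ℝ≥0∞)) (x, v) ∂μ) = 0 := by
      intro v
      have hset : MeasurableSet {x : X | c < f (π v x)} :=
        measurableSet_lt measurable_const
          ((hf.comp (hπm.comp (measurable_const.prodMk measurable_id))) :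
            Measurable fun x : X => f (π v x))
      have : ∀ x : X, S.indicator (fun _ => (1:ℝ≥0∞)) (x, v)
          = {x : X | c < f (π v x)}.indicator (fun _ => (1:ℝ≥0∞)) x := by
        intro x
        by_cases h : c < f (π v x) <;> simp [Set.indicator, hS, mem_setOf_eq, h]
      rw [lintegral_congr this, lintegral_indicator_const hset, one_mul, hslice v]
    rw [lintegral_congr hinner]
    simp
  have hae : ∀ᵐ x ∂μ, volume {v : E | c < f (π v x)} = 0 := by
    filter_upwards [(lintegral_eq_zero_iff hWm).1 hzero] with x hx
    rw [← hrw x]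
    exact hx
  refine essSup_le_of_ae_le _ ?_
  filter_upwards [hae] with x hx
  apply iSup_le
  intro r
  apply iSup_le
  intro hr
  have hb0 : volume (closedBall (0:E) r) ≠ 0 := (measure_closedBall_pos _ _ hr).ne'
  have hbt : volume (closedBall (0:E) r) ≠ ∞ := measure_closedBall_lt_top.ne
  have hgle : ∀ᵐ v ∂(volume.restrict (closedBall (0:E) r)), f (π v x) ≤ c := by
    apply ae_restrict_of_ae
    rw [ae_iff]
    simpa [not_le] using hx
  calc (volume (closedBall (0:E) r))⁻¹ * ∫⁻ v in closedBall (0:E) r, f (π v x)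
      ≤ (volume (closedBall (0:E) r))⁻¹ * ∫⁻ _ in closedBall (0:E) r, c :=
        mul_le_mul_right (lintegral_mono_ae hgle) _
    _ = (volume (closedBall (0:E) r))⁻¹ * (c * volume (closedBall (0:E) r)) := by
        rw [setLIntegral_const]
    _ = c := by
        rw [mul_comm c, ← mul_assoc, ENNReal.inv_mul_cancel hb0 hbt, one_mul]

/-- Exhaustion of the full maximal function by truncations. -/
lemma sup_eq_iSup_nat (g : E → ℝ≥0∞) :
    (⨆ (r : ℝ) (_ : 0 < r), avg n g 0 r) = ⨆ k : ℕ, maxFn n ((k:ℝ)+1) g 0 := by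
  apply le_antisymm
  · apply iSup_le
    intro r
    apply iSup_le
    intro hr
    obtain ⟨k, hk⟩ := exists_nat_ge r
    refine le_trans ?_ (le_iSup _ k)
    exact le_iSup₂ (f := fun (r' : ℝ) (_ : r' ∈ Set.Ioc (0:ℝ) ((k:ℝ)+1)) => avg n g 0 r') r
      ⟨hr, by linarith⟩
  · apply iSup_le
    intro k
    apply iSup₂_le
    intro r hr
    exact le_iSup₂ (f := fun (r' : ℝ) (_ : 0 < r') => avg n g 0 r') r hr.1

lemma maxFn_mono_trunc (g : E → ℝ≥0∞) (u : E) {s s' : ℝ} (h : s ≤ s') :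
    maxFn n s g u ≤ maxFn n s' g u := by
  apply iSup₂_le
  intro r hr
  exact le_iSup₂ (f := fun (r' : ℝ) (_ : r' ∈ Set.Ioc (0:ℝ) s') => avg n g u r') r
    ⟨hr.1, hr.2.trans h⟩

end Transfer


end WienerAux

open Set in
/-- **Wiener's maximal ergodic inequality (commutative case, strong type), `1 < p ≤ ∞`.**
There is a constant `C = C_{p,n}` such that for every `ℝⁿ`-measure-preserving system
`(X, μ, π)` and every nonnegative measurable `f`, the maximal function of the ball averages
`A_r f(x) = |B(0,r)|⁻¹ ∫_{B(0,r)} f(π(v,x)) dv` satisfies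
`‖sup_{r>0} A_r f‖_p ≤ C ‖f‖_p`. -/
theorem wiener_maximal_ergodic_strong
    (n : ℕ) (hn : 1 ≤ n) (p : ℝ≥0∞) (hp : 1 < p) :
    ∃ C : ℝ≥0, 0 < C ∧
      ∀ (X : Type) (_ : MeasurableSpace X) (μ : Measure X), SigmaFinite μ →
        ∀ π : EuclideanSpace ℝ (Fin n) → X → X,
          Measurable (fun q : EuclideanSpace ℝ (Fin n) × X => π q.1 q.2) →
          (∀ x, π 0 x = x) →
          (∀ u v x, π (u + v) x = π u (π v x)) →
          (∀ v, MeasurePreserving (π v) μ μ) →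
          ∀ f : X → ℝ≥0∞, Measurable f →
            lpNormENN μ p (fun x => ⨆ (r : ℝ) (_ : 0 < r),
                (volume (closedBall (0 : EuclideanSpace ℝ (Fin n)) r))⁻¹ *
                  ∫⁻ v in closedBall (0 : EuclideanSpace ℝ (Fin n)) r, f (π v x) ∂volume) ≤
              (C : ℝ≥0∞) * lpNormENN μ p f := by
  by_cases hpt : p = ∞
  · refine ⟨1, one_pos, ?_⟩
    intro X mX μ hσ π hπm hπ0 hπadd hπmp f hf
    rw [lpNormENN, lpNormENN, if_pos hpt, if_pos hpt, ENNReal.coe_one, one_mul]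
    exact WienerAux.pinf hπm hf hπmp
  · set q := p.toReal with hqdef
    have hq1 : 1 < q := by
      have := ENNReal.toReal_strict_mono hpt hp
      simpa using this
    have hq0 : (0:ℝ) < q := by linarith
    have hn0 : n ≠ 0 := by omega
    set B : ℝ≥0∞ := (2:ℝ≥0∞)^n * WienerAux.Cst n q with hB
    have hBt : B ≠ ∞ :=
      ENNReal.mul_ne_top (ENNReal.pow_ne_top (by norm_num)) (WienerAux.Cst_ne_top hq1)
    have hBrt : B ^ (1/q) ≠ ∞ := ENNReal.rpow_ne_top_of_nonneg (by positivity) hBt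
    refine ⟨1 + (B ^ (1/q)).toNNReal, by positivity, ?_⟩
    intro X mX μ hσ π hπm hπ0 hπadd hπmp f hf
    rw [lpNormENN, lpNormENN, if_neg hpt, if_neg hpt]
    have hkey : ∫⁻ x, (⨆ (r : ℝ) (_ : 0 < r), WienerAux.avg n (fun v => f (π v x)) 0 r) ^ q ∂μ
        ≤ B * ∫⁻ x, (f x) ^ q ∂μ := by
      have hsup : ∀ x : X, (⨆ (r : ℝ) (_ : 0 < r), WienerAux.avg n (fun v => f (π v x)) 0 r) ^ q
          = ⨆ k : ℕ, (WienerAux.maxFn n ((k:ℝ)+1) (fun v => f (π v x)) 0) ^ q := by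
        intro x
        rw [WienerAux.sup_eq_iSup_nat (fun v => f (π v x))]
        exact (ENNReal.orderIsoRpow q hq0).map_iSup _
      calc ∫⁻ x, (⨆ (r : ℝ) (_ : 0 < r), WienerAux.avg n (fun v => f (π v x)) 0 r) ^ q ∂μ
          = ∫⁻ x, (⨆ k : ℕ, (WienerAux.maxFn n ((k:ℝ)+1) (fun v => f (π v x)) 0) ^ q) ∂μ :=
            lintegral_congr hsup
        _ = ⨆ k : ℕ, ∫⁻ x, (WienerAux.maxFn n ((k:ℝ)+1) (fun v => f (π v x)) 0) ^ q ∂μ := by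
            apply lintegral_iSup
            · intro k
              exact (WienerAux.measurable_ergMax hπm hf hn0 _).pow_const q
            · intro k k' hk x
              apply ENNReal.rpow_le_rpow _ hq0.le
              apply WienerAux.maxFn_mono_trunc
              have : (k:ℝ) ≤ (k':ℝ) := by exact_mod_cast hk
              linarith
        _ ≤ B * ∫⁻ x, (f x) ^ q ∂μ := by
            apply iSup_le
            intro k
            exact WienerAux.transfer hπm hf hn0 hπadd hπmp
              (by positivity : (0:ℝ) < (k:ℝ)+1) hq1
    calc (∫⁻ x, (⨆ (r : ℝ) (_ : 0 < r),
            (volume (closedBall (0 : EuclideanSpace ℝ (Fin n)) r))⁻¹ *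
              ∫⁻ v in closedBall (0 : EuclideanSpace ℝ (Fin n)) r, f (π v x)) ^ q ∂μ) ^ (1/q)
        ≤ (B * ∫⁻ x, (f x) ^ q ∂μ) ^ (1/q) := ENNReal.rpow_le_rpow hkey (by positivity)
      _ = B ^ (1/q) * (∫⁻ x, (f x) ^ q ∂μ) ^ (1/q) :=
          ENNReal.mul_rpow_of_nonneg _ _ (by positivity)
      _ ≤ ((1 + (B ^ (1/q)).toNNReal : ℝ≥0) : ℝ≥0∞) * (∫⁻ x, (f x) ^ q ∂μ) ^ (1/q) := by
          apply mul_le_mul_left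
          rw [← ENNReal.coe_toNNReal hBrt]
          exact_mod_cast le_add_self
end

section
/- Let n ≥ 1. There exists a constant C_n (depending only on n) such that for every ℝⁿ-measure-preserving system (X, μ, π), every nonnegative integrable function f ∈ L¹(X, μ), and every λ > 0, one has μ{x ∈ X : sup_{r>0} A_r f(x) > λ} ≤ C_n ‖f‖_{L¹(X, μ)} / λ, where A_r f(x) = |B(0, r)|⁻¹ ∫_{B(0, r)} f(π(v, x)) dv. -/
open MeasureTheory Metric
open scoped NNReal ENNReal
open Set


/-- Vitali-type maximal bound on Euclidean space. -/
lemma aux_vitali_maximal (n : ℕ) (ν : Measure (EuclideanSpace ℝ (Fin n)))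
    (lam : ℝ≥0∞) (hlam0 : lam ≠ 0) (hlamt : lam ≠ ∞) (ρ : ℝ) (hρ : 0 < ρ) :
    volume {u : EuclideanSpace ℝ (Fin n) | u ∈ closedBall 0 ρ ∧
        ∃ r ∈ Set.Ioc (0:ℝ) ρ, lam * volume (closedBall u r) < ν (closedBall u r)}
      ≤ (4:ℝ≥0∞)^n * ν (closedBall 0 (ρ+ρ)) / lam := by
  classical
  set V := EuclideanSpace ℝ (Fin n)
  set T : Set V := {u : V | u ∈ closedBall 0 ρ ∧
      ∃ r ∈ Set.Ioc (0:ℝ) ρ, lam * volume (closedBall u r) < ν (closedBall u r)} with hT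
  set rad : V → ℝ := fun u =>
    if h : ∃ r ∈ Set.Ioc (0:ℝ) ρ, lam * volume (closedBall u r) < ν (closedBall u r)
    then h.choose else 0 with hrad
  have hradspec : ∀ u ∈ T, rad u ∈ Set.Ioc (0:ℝ) ρ ∧
      lam * volume (closedBall u (rad u)) < ν (closedBall u (rad u)) := by
    intro u hu
    obtain ⟨-, h⟩ := hu
    simp only [hrad, dif_pos h]
    exact ⟨h.choose_spec.1, h.choose_spec.2⟩
  obtain ⟨u, huT, hdisj, hcov⟩ :=
    Vitali.exists_disjoint_subfamily_covering_enlargement_closedBall T id rad ρ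
      (fun a ha => (hradspec a ha).1.2) 4 (by norm_num)
  -- countability of u
  have hucnt : u.Countable := by
    have h1 : Set.Countable {b : ↥u | 0 < volume (closedBall (b : V) (rad b))} := by
      apply MeasureTheory.Measure.countable_meas_pos_of_disjoint_iUnion
        (μ := (volume : Measure V))
        (As := fun b : ↥u => closedBall (b : V) (rad b))
      · exact fun b => measurableSet_closedBall
      · intro i j hij
        exact hdisj i.2 j.2 (fun h => hij (Subtype.ext h))
    have h2 : {b : ↥u | 0 < volume (closedBall (b : V) (rad b))} = Set.univ := by
      ext b
      simp only [Set.mem_setOf_eq, Set.mem_univ, iff_true]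
      exact measure_closedBall_pos _ _ (hradspec b (huT b.2)).1.1
    rw [h2] at h1
    have : Countable ↥u := Set.countable_univ_iff.mp h1
    exact Set.countable_coe_iff.mp this
  -- covering
  have hTsub : T ⊆ ⋃ b ∈ u, closedBall b (4 * rad b) := by
    intro a ha
    obtain ⟨b, hb, hsub⟩ := hcov a ha
    exact Set.mem_biUnion hb (hsub (mem_closedBall_self (hradspec a ha).1.1.le))
  have hballsub : ∀ b ∈ u, closedBall (b:V) (rad b) ⊆ closedBall (0:V) (ρ+ρ) := by
    intro b hb
    apply closedBall_subset_closedBall'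
    have h1 : rad b ≤ ρ := (hradspec b (huT hb)).1.2
    have h2 : dist b (0:V) ≤ ρ := (huT hb).1
    linarith
  have hfr : Module.finrank ℝ V = n := finrank_euclideanSpace_fin
  calc volume T ≤ volume (⋃ b ∈ u, closedBall b (4 * rad b)) := measure_mono hTsub
    _ ≤ ∑' b : ↥u, volume (closedBall (b:V) (4 * rad b)) :=
        measure_biUnion_le _ hucnt _
    _ ≤ ∑' b : ↥u, (4:ℝ≥0∞)^n * (ν (closedBall (b:V) (rad b)) / lam) := by
        apply ENNReal.tsum_le_tsum
        intro b
        have hrpos := (hradspec b (huT b.2)).1.1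
        have h4 : volume (closedBall (b:V) (4 * rad b))
            = ENNReal.ofReal ((4:ℝ) ^ Module.finrank ℝ V) * volume (closedBall (0:V) (rad b)) :=
          Measure.addHaar_closedBall_mul_of_pos _ _ (by norm_num) _
        rw [h4, hfr, ← Measure.addHaar_closedBall_center volume (b:V)]
        have h5 : ENNReal.ofReal ((4:ℝ)^n) = (4:ℝ≥0∞)^n := by
          rw [ENNReal.ofReal_pow (by norm_num)]
          norm_num
        rw [h5]
        apply mul_le_mul_right
        rw [ENNReal.le_div_iff_mul_le (Or.inl hlam0) (Or.inl hlamt)]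
        rw [mul_comm]
        exact ((hradspec b (huT b.2)).2).le
    _ = (4:ℝ≥0∞)^n * (∑' b : ↥u, ν (closedBall (b:V) (rad b))) / lam := by
        rw [ENNReal.tsum_mul_left]
        simp only [div_eq_mul_inv, ENNReal.tsum_mul_right, mul_assoc]
    _ ≤ (4:ℝ≥0∞)^n * ν (closedBall (0:V) (ρ+ρ)) / lam := by
        apply ENNReal.div_le_div_right
        apply mul_le_mul_right
        simp only [id] at hdisj
        rw [← measure_biUnion hucnt hdisj (fun b _ => measurableSet_closedBall)]
        exact measure_mono (Set.iUnion₂_subset hballsub)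


lemma aux_rat_iff (n : ℕ) (hn : 1 ≤ n) (g : EuclideanSpace ℝ (Fin n) → ℝ≥0∞)
    (hg : Measurable g) (lam : ℝ≥0∞) :
    (lam < ⨆ (r : ℝ) (_ : 0 < r),
        (volume (closedBall (0 : EuclideanSpace ℝ (Fin n)) r))⁻¹ *
          ∫⁻ v in closedBall (0 : EuclideanSpace ℝ (Fin n)) r, g v) ↔
      ∃ q : ℚ, 0 < q ∧
        lam * volume (closedBall (0 : EuclideanSpace ℝ (Fin n)) (q:ℝ)) <
          ∫⁻ v in closedBall (0 : EuclideanSpace ℝ (Fin n)) (q:ℝ), g v := by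
  classical
  have : NeZero n := ⟨by omega⟩
  have hnt : Nontrivial (EuclideanSpace ℝ (Fin n)) := inferInstance
  have hc0 : ∀ r : ℝ, 0 < r → volume (closedBall (0:EuclideanSpace ℝ (Fin n)) r) ≠ 0 :=
    fun r hr => (measure_closedBall_pos _ _ hr).ne'
  have hcf : ∀ r : ℝ, volume (closedBall (0:EuclideanSpace ℝ (Fin n)) r) ≠ ∞ :=
    fun r => measure_closedBall_lt_top.ne
  have hiff : ∀ r : ℝ, 0 < r →
      ((lam < (volume (closedBall (0:EuclideanSpace ℝ (Fin n)) r))⁻¹ * ∫⁻ v in closedBall (0:EuclideanSpace ℝ (Fin n)) r, g v) ↔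
        lam * volume (closedBall (0:EuclideanSpace ℝ (Fin n)) r) < ∫⁻ v in closedBall (0:EuclideanSpace ℝ (Fin n)) r, g v) := by
    intro r hr
    rw [mul_comm, ← div_eq_mul_inv]
    exact ENNReal.lt_div_iff_mul_lt (Or.inl (hc0 r hr)) (Or.inl (hcf r))
  constructor
  · intro h
    rw [lt_iSup_iff] at h
    obtain ⟨r, h⟩ := h
    rw [lt_iSup_iff] at h
    obtain ⟨hr, h⟩ := h
    set νx := volume.withDensity g with hνx
    have hν : ∀ s : Set (EuclideanSpace ℝ (Fin n)), MeasurableSet s → νx s = ∫⁻ v in s, g v :=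
      fun s hs => withDensity_apply g hs
    have hsph : νx (sphere (0:EuclideanSpace ℝ (Fin n)) r) = 0 :=
      (withDensity_absolutelyContinuous volume g) (Measure.addHaar_sphere volume 0 r)
    have hball : νx (closedBall (0:EuclideanSpace ℝ (Fin n)) r) = νx (ball (0:EuclideanSpace ℝ (Fin n)) r) := by
      apply le_antisymm
      · calc νx (closedBall (0:EuclideanSpace ℝ (Fin n)) r) = νx (ball (0:EuclideanSpace ℝ (Fin n)) r ∪ sphere (0:EuclideanSpace ℝ (Fin n)) r) := by
              rw [ball_union_sphere]
          _ ≤ νx (ball (0:EuclideanSpace ℝ (Fin n)) r) + νx (sphere (0:EuclideanSpace ℝ (Fin n)) r) := measure_union_le _ _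
          _ = νx (ball (0:EuclideanSpace ℝ (Fin n)) r) := by rw [hsph, add_zero]
      · exact measure_mono ball_subset_closedBall
    have hQun : ball (0:EuclideanSpace ℝ (Fin n)) r = ⋃ q : {q : ℚ // 0 < q ∧ (q:ℝ) < r}, closedBall (0:EuclideanSpace ℝ (Fin n)) (q:ℝ) := by
      ext v
      simp only [mem_ball, Set.mem_iUnion, mem_closedBall]
      constructor
      · intro hv
        obtain ⟨q, hq1, hq2⟩ := exists_rat_btwn (show max (dist v 0) 0 < r from
          max_lt hv hr)
        refine ⟨⟨q, ?_, hq2⟩, ?_⟩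
        · exact_mod_cast lt_of_le_of_lt (le_max_right _ _) hq1
        · exact le_of_lt (lt_of_le_of_lt (le_max_left _ _) hq1)
      · rintro ⟨q, hq⟩
        exact lt_of_le_of_lt hq q.2.2
    have hdir : Directed (· ⊆ ·) (fun q : {q : ℚ // 0 < q ∧ (q:ℝ) < r} =>
        closedBall (0:EuclideanSpace ℝ (Fin n)) (q:ℝ)) := by
      intro i j
      rcases le_total (i:ℚ) (j:ℚ) with hij | hij
      · exact ⟨j, closedBall_subset_closedBall (by exact_mod_cast hij), subset_rfl⟩
      · exact ⟨i, subset_rfl, closedBall_subset_closedBall (by exact_mod_cast hij)⟩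
    have hsup : νx (ball (0:EuclideanSpace ℝ (Fin n)) r) = ⨆ q : {q : ℚ // 0 < q ∧ (q:ℝ) < r},
        νx (closedBall (0:EuclideanSpace ℝ (Fin n)) (q:ℝ)) := by
      rw [hQun]
      exact hdir.measure_iUnion
    have h2 : lam < ⨆ q : {q : ℚ // 0 < q ∧ (q:ℝ) < r},
        (volume (closedBall (0:EuclideanSpace ℝ (Fin n)) r))⁻¹ * νx (closedBall (0:EuclideanSpace ℝ (Fin n)) (q:ℝ)) := by
      rw [← ENNReal.mul_iSup, ← hsup, ← hball, hν _ measurableSet_closedBall]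
      exact h
    rw [lt_iSup_iff] at h2
    obtain ⟨q, hq⟩ := h2
    have hqr : (0:ℝ) < (q:ℚ) := by exact_mod_cast q.2.1
    have hle : (volume (closedBall (0:EuclideanSpace ℝ (Fin n)) r))⁻¹ * νx (closedBall (0:EuclideanSpace ℝ (Fin n)) (q:ℝ))
        ≤ (volume (closedBall (0:EuclideanSpace ℝ (Fin n)) (q:ℝ)))⁻¹ * ∫⁻ v in closedBall (0:EuclideanSpace ℝ (Fin n)) (q:ℝ), g v := by
      rw [hν _ measurableSet_closedBall]
      apply mul_le_mul_left
      exact ENNReal.inv_le_inv.mpr (measure_mono (closedBall_subset_closedBall q.2.2.le))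
    exact ⟨q, q.2.1, (hiff (q:ℝ) hqr).mp (lt_of_lt_of_le hq hle)⟩
  · rintro ⟨q, hq, hlt⟩
    have hqr : (0:ℝ) < (q:ℚ) := by exact_mod_cast hq
    have h1 := (hiff (q:ℝ) hqr).mpr hlt
    exact lt_of_lt_of_le h1 (le_iSup₂ (f := fun (r : ℝ) (_ : 0 < r) =>
      (volume (closedBall (0:EuclideanSpace ℝ (Fin n)) r))⁻¹ * ∫⁻ v in closedBall (0:EuclideanSpace ℝ (Fin n)) r, g v) (q:ℝ) hqr)



/-- **Wiener's maximal ergodic inequality (commutative case, weak type (1,1)).**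
There is a constant `C = C_n` such that for every `ℝⁿ`-measure-preserving system
`(X, μ, π)`, every nonnegative integrable `f ∈ L¹(X,μ)` and every `λ > 0`,
`μ{ sup_{r>0} A_r f > λ } ≤ C ‖f‖₁ / λ`, where
`A_r f(x) = |B(0,r)|⁻¹ ∫_{B(0,r)} f(π(v,x)) dv`. -/
theorem wiener_maximal_ergodic_weak11
    (n : ℕ) (hn : 1 ≤ n) :
    ∃ C : ℝ≥0, 0 < C ∧
      ∀ (X : Type) (_ : MeasurableSpace X) (μ : Measure X), SigmaFinite μ →
        ∀ π : EuclideanSpace ℝ (Fin n) → X → X,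
          Measurable (fun q : EuclideanSpace ℝ (Fin n) × X => π q.1 q.2) →
          (∀ x, π 0 x = x) →
          (∀ u v x, π (u + v) x = π u (π v x)) →
          (∀ v, MeasurePreserving (π v) μ μ) →
          ∀ f : X → ℝ≥0∞, Measurable f → (∫⁻ x, f x ∂μ) < ∞ →
            ∀ lam : ℝ≥0, 0 < lam →
              μ {x : X | (lam : ℝ≥0∞) < ⨆ (r : ℝ) (_ : 0 < r),
                  (volume (closedBall (0 : EuclideanSpace ℝ (Fin n)) r))⁻¹ *
                    ∫⁻ v in closedBall (0 : EuclideanSpace ℝ (Fin n)) r, f (π v x) ∂volume} ≤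
                (C : ℝ≥0∞) * (∫⁻ x, f x ∂μ) / (lam : ℝ≥0∞) := by
  classical
  refine ⟨(8:ℝ≥0)^n, pow_pos (by norm_num) n, ?_⟩
  intro X mX μ hσ π hπmeas hπ0 hπadd hπmp f hf hfint lam hlam
  have hlam0 : (lam : ℝ≥0∞) ≠ 0 := by exact_mod_cast hlam.ne'
  have hlamt : (lam : ℝ≥0∞) ≠ ∞ := ENNReal.coe_ne_top
  have hπv : ∀ v : EuclideanSpace ℝ (Fin n), Measurable (fun x => π v x) :=
    fun v => hπmeas.comp measurable_prodMk_left
  have hπx : ∀ x : X, Measurable (fun u : EuclideanSpace ℝ (Fin n) => π u x) :=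
    fun x => hπmeas.comp measurable_prodMk_right
  have hgx : ∀ x : X, Measurable (fun v : EuclideanSpace ℝ (Fin n) => f (π v x)) :=
    fun x => hf.comp (hπx x)
  have hc0 : ∀ r : ℝ, 0 < r → volume (closedBall (0:EuclideanSpace ℝ (Fin n)) r) ≠ 0 :=
    fun r hr => (measure_closedBall_pos _ _ hr).ne'
  have hcf : ∀ r : ℝ, volume (closedBall (0:EuclideanSpace ℝ (Fin n)) r) ≠ ∞ :=
    fun r => measure_closedBall_lt_top.ne
  have hfr : Module.finrank ℝ (EuclideanSpace ℝ (Fin n)) = n := finrank_euclideanSpace_fin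
  -- measurability of the averages
  have hImeas : ∀ r : ℝ, Measurable (fun x =>
      ∫⁻ v in closedBall (0:EuclideanSpace ℝ (Fin n)) r, f (π v x)) := by
    intro r
    exact Measurable.lintegral_prod_right'
      (f := fun p : X × EuclideanSpace ℝ (Fin n) => f (π p.2 p.1))
      (hf.comp (hπmeas.comp measurable_swap))
  -- the exceptional sets
  set E : ℕ → Set X := fun k => {x | ∃ q : ℚ, 0 < q ∧ (q:ℝ) ≤ k ∧
      (lam:ℝ≥0∞) * volume (closedBall (0:EuclideanSpace ℝ (Fin n)) (q:ℝ)) <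
        ∫⁻ v in closedBall (0:EuclideanSpace ℝ (Fin n)) (q:ℝ), f (π v x)} with hE
  have hEmeas : ∀ k, MeasurableSet (E k) := by
    intro k
    have heq : E k = ⋃ q : ℚ, {x | 0 < q ∧ (q:ℝ) ≤ k ∧
        (lam:ℝ≥0∞) * volume (closedBall (0:EuclideanSpace ℝ (Fin n)) (q:ℝ)) <
          ∫⁻ v in closedBall (0:EuclideanSpace ℝ (Fin n)) (q:ℝ), f (π v x)} := by
      ext x; simp [hE, Set.mem_iUnion]
    rw [heq]
    refine MeasurableSet.iUnion fun q => ?_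
    by_cases hq : 0 < q ∧ (q:ℝ) ≤ k
    · have heq2 : {x | 0 < q ∧ (q:ℝ) ≤ k ∧
          (lam:ℝ≥0∞) * volume (closedBall (0:EuclideanSpace ℝ (Fin n)) (q:ℝ)) <
            ∫⁻ v in closedBall (0:EuclideanSpace ℝ (Fin n)) (q:ℝ), f (π v x)}
          = {x | (lam:ℝ≥0∞) * volume (closedBall (0:EuclideanSpace ℝ (Fin n)) (q:ℝ)) <
            ∫⁻ v in closedBall (0:EuclideanSpace ℝ (Fin n)) (q:ℝ), f (π v x)} := by
        ext x; simp [hq.1, hq.2]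
      rw [heq2]
      exact measurableSet_lt measurable_const (hImeas _)
    · have heq2 : {x | 0 < q ∧ (q:ℝ) ≤ k ∧
          (lam:ℝ≥0∞) * volume (closedBall (0:EuclideanSpace ℝ (Fin n)) (q:ℝ)) <
            ∫⁻ v in closedBall (0:EuclideanSpace ℝ (Fin n)) (q:ℝ), f (π v x)}
          = (∅ : Set X) := by
        ext x; simp only [Set.mem_setOf_eq, Set.mem_empty_iff_false, iff_false]
        intro h; exact hq ⟨h.1, h.2.1⟩
      rw [heq2]; exact MeasurableSet.empty
  have hEmono : Monotone E := by
    intro k l hkl x hx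
    obtain ⟨q, hq1, hq2, hq3⟩ := hx
    exact ⟨q, hq1, le_trans hq2 (by exact_mod_cast hkl), hq3⟩
  -- identify the level set with the union of the E k
  have hset : {x : X | (lam : ℝ≥0∞) < ⨆ (r : ℝ) (_ : 0 < r),
      (volume (closedBall (0 : EuclideanSpace ℝ (Fin n)) r))⁻¹ *
        ∫⁻ v in closedBall (0 : EuclideanSpace ℝ (Fin n)) r, f (π v x) ∂volume}
      = ⋃ k : ℕ, E k := by
    ext x
    simp only [Set.mem_setOf_eq, Set.mem_iUnion]
    rw [aux_rat_iff n hn (fun v => f (π v x)) (hgx x) lam]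
    constructor
    · rintro ⟨q, hq, hlt⟩
      exact ⟨⌈(q:ℝ)⌉₊, q, hq, Nat.le_ceil _, hlt⟩
    · rintro ⟨k, q, hq, _, hlt⟩
      exact ⟨q, hq, hlt⟩
  -- the key bound for each k
  have hEbound : ∀ k : ℕ, μ (E k) ≤ (8:ℝ≥0∞)^n * (∫⁻ x, f x ∂μ) / lam := by
    intro k
    set ρ : ℝ := (k:ℝ) + 1 with hρdef
    have hρ : 0 < ρ := by positivity
    have hEk := hEmeas k
    -- pointwise transference bound
    have hpt : ∀ x : X, volume {u : EuclideanSpace ℝ (Fin n) |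
        u ∈ closedBall 0 ρ ∧ π u x ∈ E k}
        ≤ (4:ℝ≥0∞)^n * (∫⁻ v in closedBall (0:EuclideanSpace ℝ (Fin n)) (ρ+ρ), f (π v x)) / lam := by
      intro x
      have main := aux_vitali_maximal n (volume.withDensity (fun v => f (π v x)))
        lam hlam0 hlamt ρ hρ
      refine le_trans (measure_mono ?_) (le_trans main (le_of_eq ?_))
      · rintro u ⟨hu1, q, hq0, hqk, hqlt⟩
        have hq0' : (0:ℝ) < (q:ℚ) := by exact_mod_cast hq0
        refine ⟨hu1, (q:ℝ), ⟨hq0', by rw [hρdef]; linarith⟩, ?_⟩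
        have hvol : volume (closedBall u (q:ℝ))
            = volume (closedBall (0:EuclideanSpace ℝ (Fin n)) (q:ℝ)) :=
          Measure.addHaar_closedBall_center _ _ _
        have htrans : (volume.withDensity (fun v => f (π v x))) (closedBall u (q:ℝ))
            = ∫⁻ v in closedBall (0:EuclideanSpace ℝ (Fin n)) (q:ℝ), f (π v (π u x)) := by
          rw [withDensity_apply _ measurableSet_closedBall]
          have emb := (MeasurableEquiv.addRight u).measurableEmbedding
          have e1 : (volume : Measure (EuclideanSpace ℝ (Fin n))).restrict (closedBall u (q:ℝ))
              = ((volume : Measure (EuclideanSpace ℝ (Fin n))).restrict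
                  (closedBall (0:EuclideanSpace ℝ (Fin n)) (q:ℝ))).map (· + u) := by
            have h1 : ((volume : Measure (EuclideanSpace ℝ (Fin n))).map (· + u)).restrict
                (closedBall u (q:ℝ))
                = ((volume : Measure (EuclideanSpace ℝ (Fin n))).restrict
                    ((· + u) ⁻¹' closedBall u (q:ℝ))).map (· + u) :=
              emb.restrict_map _ _
            rw [map_add_right_eq_self] at h1
            rw [h1]
            congr 2
            ext v
            simp [mem_closedBall, dist_eq_norm]
          rw [e1, lintegral_map (hgx x) (measurable_add_const u)]
          refine lintegral_congr fun v => ?_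
          rw [← hπadd v u x]
        rw [hvol, htrans]
        exact hqlt
      · rw [withDensity_apply _ measurableSet_closedBall]
    -- compute the integral of the left-hand side
    have lhs_eq : ∫⁻ x, volume {u : EuclideanSpace ℝ (Fin n) |
        u ∈ closedBall 0 ρ ∧ π u x ∈ E k} ∂μ
        = volume (closedBall (0:EuclideanSpace ℝ (Fin n)) ρ) * μ (E k) := by
      have hind : ∀ x : X, volume {u : EuclideanSpace ℝ (Fin n) |
          u ∈ closedBall 0 ρ ∧ π u x ∈ E k}
          = ∫⁻ u in closedBall (0:EuclideanSpace ℝ (Fin n)) ρ,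
              (E k).indicator (fun _ => (1:ℝ≥0∞)) (π u x) := by
        intro x
        have hsm : MeasurableSet ((fun u => π u x) ⁻¹' E k) := (hπx x) hEk
        have h2 : ∀ u : EuclideanSpace ℝ (Fin n),
            (E k).indicator (fun _ => (1:ℝ≥0∞)) (π u x)
            = ((fun u => π u x) ⁻¹' E k).indicator (fun _ => (1:ℝ≥0∞)) u := by
          intro u; simp [Set.indicator_apply, Set.mem_preimage]
        rw [lintegral_congr h2, lintegral_indicator hsm, setLIntegral_one,
          Measure.restrict_apply hsm]
        congr 1
        ext u; simp [and_comm]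
      calc ∫⁻ x, volume {u : EuclideanSpace ℝ (Fin n) |
              u ∈ closedBall 0 ρ ∧ π u x ∈ E k} ∂μ
          = ∫⁻ x, (∫⁻ u in closedBall (0:EuclideanSpace ℝ (Fin n)) ρ,
              (E k).indicator (fun _ => (1:ℝ≥0∞)) (π u x)) ∂μ := lintegral_congr hind
        _ = ∫⁻ u in closedBall (0:EuclideanSpace ℝ (Fin n)) ρ,
              ∫⁻ x, (E k).indicator (fun _ => (1:ℝ≥0∞)) (π u x) ∂μ := by
            apply lintegral_lintegral_swap
            exact ((measurable_const.indicator hEk).comp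
              (hπmeas.comp measurable_swap)).aemeasurable
        _ = ∫⁻ _ in closedBall (0:EuclideanSpace ℝ (Fin n)) ρ, μ (E k) := by
            refine lintegral_congr fun u => ?_
            have h3 : ∀ x : X, (E k).indicator (fun _ => (1:ℝ≥0∞)) (π u x)
                = ((fun x => π u x) ⁻¹' E k).indicator (fun _ => (1:ℝ≥0∞)) x := by
              intro x; simp [Set.indicator_apply, Set.mem_preimage]
            rw [lintegral_congr h3, lintegral_indicator ((hπv u) hEk), setLIntegral_one]
            exact (hπmp u).measure_preimage hEk.nullMeasurableSet
        _ = volume (closedBall (0:EuclideanSpace ℝ (Fin n)) ρ) * μ (E k) := by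
            rw [setLIntegral_const, mul_comm]
    -- compute the integral of the right-hand side
    have rhs_eq : ∫⁻ x, ((4:ℝ≥0∞)^n *
          (∫⁻ v in closedBall (0:EuclideanSpace ℝ (Fin n)) (ρ+ρ), f (π v x)) / lam) ∂μ
        = (4:ℝ≥0∞)^n * (volume (closedBall (0:EuclideanSpace ℝ (Fin n)) (ρ+ρ))
            * ∫⁻ x, f x ∂μ) / lam := by
      have hswap : ∫⁻ x, (∫⁻ v in closedBall (0:EuclideanSpace ℝ (Fin n)) (ρ+ρ),
            f (π v x)) ∂μ
          = volume (closedBall (0:EuclideanSpace ℝ (Fin n)) (ρ+ρ)) * ∫⁻ x, f x ∂μ := by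
        have h0 : ∫⁻ x, (∫⁻ v in closedBall (0:EuclideanSpace ℝ (Fin n)) (ρ+ρ),
              f (π v x)) ∂μ
            = ∫⁻ v in closedBall (0:EuclideanSpace ℝ (Fin n)) (ρ+ρ),
                ∫⁻ x, f (π v x) ∂μ := by
          apply lintegral_lintegral_swap
          exact (hf.comp (hπmeas.comp measurable_swap)).aemeasurable
        rw [h0]
        calc ∫⁻ v in closedBall (0:EuclideanSpace ℝ (Fin n)) (ρ+ρ), ∫⁻ x, f (π v x) ∂μ
            = ∫⁻ _ in closedBall (0:EuclideanSpace ℝ (Fin n)) (ρ+ρ), ∫⁻ x, f x ∂μ :=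
              lintegral_congr fun v => (hπmp v).lintegral_comp hf
          _ = volume (closedBall (0:EuclideanSpace ℝ (Fin n)) (ρ+ρ)) * ∫⁻ x, f x ∂μ := by
              rw [setLIntegral_const, mul_comm]
      simp only [div_eq_mul_inv, mul_assoc]
      rw [lintegral_const_mul' _ _ (ENNReal.pow_ne_top (by norm_num : (4:ℝ≥0∞) ≠ ∞)),
        lintegral_mul_const' _ _ (by simp [hlam0] : ((lam:ℝ≥0∞))⁻¹ ≠ ∞), hswap, mul_assoc]
    -- combine
    have hmono := lintegral_mono (μ := μ) hpt
    rw [lhs_eq, rhs_eq] at hmono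
    have hdouble : volume (closedBall (0:EuclideanSpace ℝ (Fin n)) (ρ+ρ))
        = (2:ℝ≥0∞)^n * volume (closedBall (0:EuclideanSpace ℝ (Fin n)) ρ) := by
      have h2 : ρ + ρ = 2 * ρ := by ring
      rw [h2, Measure.addHaar_closedBall_mul_of_pos volume _ (by norm_num : (0:ℝ) < 2) ρ, hfr]
      congr 1
      rw [ENNReal.ofReal_pow (by norm_num : (0:ℝ) ≤ 2)]
      norm_num
    rw [hdouble] at hmono
    have h8 : (4:ℝ≥0∞)^n * ((2:ℝ≥0∞)^n * volume (closedBall (0:EuclideanSpace ℝ (Fin n)) ρ)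
          * ∫⁻ x, f x ∂μ) / lam
        = volume (closedBall (0:EuclideanSpace ℝ (Fin n)) ρ)
          * ((8:ℝ≥0∞)^n * (∫⁻ x, f x ∂μ) / lam) := by
      have h48 : (8:ℝ≥0∞)^n = (4:ℝ≥0∞)^n * (2:ℝ≥0∞)^n := by
        rw [← mul_pow]; norm_num
      rw [h48, div_eq_mul_inv, div_eq_mul_inv]
      ring
    rw [h8] at hmono
    exact (ENNReal.mul_le_mul_iff_right (hc0 ρ hρ) (hcf ρ)).mp hmono
  rw [hset, hEmono.measure_iUnion]
  refine iSup_le fun k => le_trans (hEbound k) (le_of_eq ?_)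
  norm_cast
end
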